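/- arXiv:2106.15972 — 7 statements merged into one kernel-verified Lean document; each statement's English description precedes it below -/
import Mathlib

section
/- Theorem 1 (exponential kernel). Let α∈(0,1) and k=α/(1−α). Define f(x,t) = k t e^{−kx−t} W_{1,2}(k x t) for x>0, t≥0. Then f(x,0)=0 for all x>0, and for all x>0 and t≥0 the function f satisfies the integro-differential equation ∂f/∂t(x,t) = −∫_0^x (∂f/∂z)(z,t) e^{−k(x−z)} dz + k(1−t) e^{−t−kx}. -/
open MeasureTheory Real Set

/-- The Wright function `W_{a,b}(x) = Σ_{j≥0} x^j / (j! Γ(a j + b))`. -/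
noncomputable def wright (a b x : ℝ) : ℝ :=
  ∑' j : ℕ, x ^ j / ((Nat.factorial j : ℝ) * Real.Gamma (a * j + b))

/-- The one-parameter Mittag-Leffler function `E_ν(x) = Σ_{j≥0} x^j / Γ(ν j + 1)`. -/
noncomputable def mlOne (ν x : ℝ) : ℝ :=
  ∑' j : ℕ, x ^ j / Real.Gamma (ν * j + 1)

/-- The two-parameter Mittag-Leffler function `E_{a,b}(x) = Σ_{j≥0} x^j / Γ(a j + b)`. -/
noncomputable def mlTwo (a b x : ℝ) : ℝ :=
  ∑' j : ℕ, x ^ j / Real.Gamma (a * j + b)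

/-- The rising factorial `(γ)_j = γ (γ+1) ⋯ (γ+j-1)`. -/
noncomputable def risingFactorial (γ : ℝ) (j : ℕ) : ℝ :=
  ∏ i ∈ Finset.range j, (γ + i)

/-- The Prabhakar (three-parameter Mittag-Leffler) function
`E^γ_{a,b}(x) = Σ_{j≥0} (γ)_j x^j / (j! Γ(a j + b))`. -/
noncomputable def prabhakar (a b γ x : ℝ) : ℝ :=
  ∑' j : ℕ, risingFactorial γ j * x ^ j / ((Nat.factorial j : ℝ) * Real.Gamma (a * j + b))

/-- The upper incomplete gamma function `Γ(ρ; x) = ∫_x^∞ e^{-w} w^{ρ-1} dw`. -/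
noncomputable def uGamma (ρ x : ℝ) : ℝ :=
  ∫ w in Set.Ioi x, Real.exp (-w) * w ^ (ρ - 1)

/-- `convIter g n` is the `(n+1)`-fold convolution `g^{*(n+1)}` of `g` on `(0,∞)`:
`convIter g 0 = g` and `convIter g (n+1) = g * (convIter g n)`. -/
noncomputable def convIter (g : ℝ → ℝ) : ℕ → ℝ → ℝ
  | 0 => g
  | n + 1 => fun x => ∫ y in (0:ℝ)..x, g (x - y) * convIter g n y

namespace EKAux

/-- coefficients of `W_{1,2}` -/
noncomputable def ccf (j : ℕ) : ℝ := 1 / (j.factorial * (j+1).factorial)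

lemma ccf_nonneg (j : ℕ) : 0 ≤ ccf j := by unfold ccf; positivity

lemma ccf_le (j : ℕ) : ccf j ≤ 1 / j.factorial := by
  unfold ccf
  have h1 : (j.factorial : ℝ) ≤ (j.factorial : ℝ) * (j+1).factorial := by
    have h0 : (1:ℝ) ≤ ((j+1).factorial : ℝ) := by
      exact_mod_cast Nat.one_le_iff_ne_zero.mpr (j+1).factorial_ne_zero
    have h1 : (0:ℝ) < (j.factorial : ℝ) := by exact_mod_cast j.factorial_pos
    nlinarith
  exact one_div_le_one_div_of_le (by positivity) h1

lemma cc_identity (j : ℕ) : ((j:ℝ)+2) * ccf (j+1) = ccf j / ((j:ℝ)+1) := by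
  unfold ccf
  have h1 : ((j+2).factorial : ℝ) = ((j:ℝ)+2) * (j+1).factorial := by
    rw [Nat.factorial_succ]; push_cast; ring
  have h2 : ((j+1).factorial : ℝ) = ((j:ℝ)+1) * j.factorial := by
    rw [Nat.factorial_succ]; push_cast; ring
  have hj : (0:ℝ) < (j.factorial : ℝ) := by exact_mod_cast j.factorial_pos
  have : ((j+1)+1) = j + 2 := rfl
  rw [this, h1, h2]
  field_simp

lemma nat_le_two_pow (j : ℕ) : ((j:ℝ)+1) ≤ 2^(j+1) := by
  have h : j + 1 ≤ 2^(j+1) := Nat.succ_le_of_lt (lt_of_lt_of_le (Nat.lt_two_pow_self (n := j))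
    (Nat.pow_le_pow_right (by norm_num) (Nat.le_succ j)))
  exact_mod_cast h

lemma shifted_bound {m : ℝ} (hm : 0 ≤ m) (j : ℕ) :
    m ^ j / j.factorial ≤ (2*m+2) ^ (j+1) / (j+1).factorial := by
  have hfac : ((j+1).factorial : ℝ) = ((j:ℝ)+1) * j.factorial := by
    rw [Nat.factorial_succ]; push_cast; ring
  have hj : (0:ℝ) < (j.factorial : ℝ) := by exact_mod_cast j.factorial_pos
  have hj1 : (0:ℝ) < (j:ℝ)+1 := by positivity
  rw [hfac, div_le_div_iff₀ hj (by positivity)]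
  have key : m ^ j * ((j:ℝ)+1) ≤ (2*m+2) ^ (j+1) := by
    have h2 : m ^ j * ((j:ℝ)+1) ≤ m ^ j * 2^(j+1) :=
      mul_le_mul_of_nonneg_left (nat_le_two_pow j) (pow_nonneg hm j)
    have h3 : (m:ℝ) ^ j * 2^(j+1) = 2 * ((2*m) ^ j) := by ring
    have h4 : (2*m) ^ j ≤ (2*m+2) ^ j := pow_le_pow_left₀ (by linarith) (by linarith) j
    have h5 : 2 * ((2*m) ^ j) ≤ (2*m+2) * (2*m+2)^j := by
      have := pow_nonneg (show (0:ℝ) ≤ 2*m by linarith) j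
      nlinarith
    calc m ^ j * ((j:ℝ)+1) ≤ m ^ j * 2^(j+1) := h2
      _ = 2 * ((2*m) ^ j) := h3
      _ ≤ (2*m+2) * (2*m+2)^j := h5
      _ = (2*m+2)^(j+1) := by ring
  calc m ^ j * (((j:ℝ)+1) * j.factorial) = (m ^ j * ((j:ℝ)+1)) * j.factorial := by ring
    _ ≤ (2*m+2) ^ (j+1) * j.factorial := mul_le_mul_of_nonneg_right key (le_of_lt hj)

/-- master summability lemma -/
lemma summable_bound {a : ℕ → ℝ} {c q : ℝ} (hq : 0 ≤ q)
    (h : ∀ j, |a j| ≤ c * q ^ j / j.factorial) (r : ℝ) :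
    Summable fun j => a j * r ^ j := by
  apply Summable.of_norm
  apply Summable.of_nonneg_of_le (fun j => norm_nonneg _) (fun j => ?_)
    ((Real.summable_pow_div_factorial (q * |r|)).mul_left c)
  have hj : (0:ℝ) < (j.factorial : ℝ) := by exact_mod_cast j.factorial_pos
  calc ‖a j * r ^ j‖ = |a j| * |r| ^ j := by
        rw [Real.norm_eq_abs, abs_mul, abs_pow]
      _ ≤ (c * q ^ j / j.factorial) * |r| ^ j :=
        mul_le_mul_of_nonneg_right (h j) (pow_nonneg (abs_nonneg r) j)
      _ = c * ((q * |r|) ^ j / j.factorial) := by rw [mul_pow]; ring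

/-- summability of derivative-term sequence -/
lemma summable_deriv_bound {a : ℕ → ℝ} {c q : ℝ} (hq : 0 ≤ q)
    (h : ∀ j, |a j| ≤ c * q ^ j / j.factorial) {R : ℝ} (hR : 0 ≤ R) :
    Summable fun j => |a j| * ((j:ℝ) * R ^ (j-1)) := by
  have hc : 0 ≤ c := by
    have := (abs_nonneg (a 0)).trans (h 0)
    simpa using this
  rw [← summable_nat_add_iff 1]
  apply Summable.of_nonneg_of_le
    (fun j => by positivity)
    (fun j => ?_)
    ((Real.summable_pow_div_factorial (q * R)).mul_left (c * q))
  have hfac : ((j+1).factorial : ℝ) = ((j:ℝ)+1) * j.factorial := by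
    rw [Nat.factorial_succ]; push_cast; ring
  have hj : (0:ℝ) < (j.factorial : ℝ) := by exact_mod_cast j.factorial_pos
  have hRj : ((j+1:ℕ):ℝ) * R ^ ((j+1)-1) = ((j:ℝ)+1) * R ^ j := by
    simp only [Nat.add_sub_cancel]; push_cast; ring
  have step1 : |a (j+1)| * (((j+1:ℕ):ℝ) * R ^ ((j+1)-1))
      ≤ (c * q ^ (j+1) / (j+1).factorial) * (((j:ℝ)+1) * R ^ j) := by
    rw [hRj]
    exact mul_le_mul_of_nonneg_right (h (j+1)) (by positivity)
  refine step1.trans (le_of_eq ?_)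
  rw [hfac, mul_pow]
  field_simp
  ring
variable {a : ℕ → ℝ} {c q : ℝ}

/-- Termwise derivative of an entire power series. -/
lemma hasDerivAt_ps (hq : 0 ≤ q)
    (h : ∀ j, |a j| ≤ c * q ^ j / j.factorial) (t : ℝ) :
    HasDerivAt (fun s => ∑' j, a j * s ^ j) (∑' j, a j * ((j:ℝ) * t ^ (j-1))) t := by
  set R : ℝ := |t| + 1 with hR
  have hR0 : 0 ≤ R := by positivity
  have htR : t ∈ Metric.ball (0:ℝ) R := by
    simp only [Metric.mem_ball, Real.dist_eq, sub_zero, hR]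
    linarith
  refine hasDerivAt_tsum_of_isPreconnected
    (u := fun j => |a j| * ((j:ℝ) * R ^ (j-1)))
    (summable_deriv_bound hq h hR0) Metric.isOpen_ball
    ((convex_ball (0:ℝ) R).isPreconnected)
    (fun n y _ => (hasDerivAt_pow n y).const_mul (a n))
    (fun n y hy => ?_) htR (summable_bound hq h t) htR
  have hy' : |y| ≤ R := le_of_lt (by simpa [Real.dist_eq] using hy)
  rw [Real.norm_eq_abs, abs_mul, abs_mul, abs_pow, Nat.abs_cast]
  show |a n| * ((n:ℝ) * |y| ^ (n-1)) ≤ |a n| * ((n:ℝ) * R ^ (n-1))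
  exact mul_le_mul_of_nonneg_left (mul_le_mul_of_nonneg_left
    (pow_le_pow_left₀ (abs_nonneg y) hy' _) (Nat.cast_nonneg n)) (abs_nonneg _)

/-- Summability of the derivative terms at a point. -/
lemma summable_deriv_terms (hq : 0 ≤ q)
    (h : ∀ j, |a j| ≤ c * q ^ j / j.factorial) (t : ℝ) :
    Summable fun j => a j * ((j:ℝ) * t ^ (j-1)) := by
  apply Summable.of_norm
  apply Summable.of_nonneg_of_le (fun j => norm_nonneg _) (fun j => ?_)
    (summable_deriv_bound hq h (R := |t| + 1) (by positivity))
  rw [Real.norm_eq_abs, abs_mul, abs_mul, abs_pow, Nat.abs_cast]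
  show |a j| * ((j:ℝ) * |t| ^ (j-1)) ≤ |a j| * ((j:ℝ) * (|t|+1) ^ (j-1))
  exact mul_le_mul_of_nonneg_left (mul_le_mul_of_nonneg_left
    (pow_le_pow_left₀ (abs_nonneg t) (by linarith) _) (Nat.cast_nonneg j)) (abs_nonneg _)



noncomputable def seqP (m : ℝ) : ℕ → ℝ
  | 0 => 0
  | j + 1 => m ^ j * ccf j

noncomputable def seqQ (m : ℝ) (j : ℕ) : ℝ := m ^ j * ccf j

noncomputable def seqH (m : ℝ) : ℕ → ℝ
  | 0 => 0
  | j + 1 => seqQ m j / ((j:ℝ) + 1)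

lemma abs_pow_ccf_le (m : ℝ) (j : ℕ) : |m ^ j * ccf j| ≤ |m| ^ j / j.factorial := by
  rw [abs_mul, abs_pow, abs_of_nonneg (ccf_nonneg j)]
  calc |m| ^ j * ccf j ≤ |m| ^ j * (1 / j.factorial) :=
        mul_le_mul_of_nonneg_left (ccf_le j) (pow_nonneg (abs_nonneg m) j)
    _ = |m| ^ j / j.factorial := by ring

lemma seqQ_bound (m : ℝ) (j : ℕ) : |seqQ m j| ≤ 1 * (|m|+1) ^ j / j.factorial := by
  refine (abs_pow_ccf_le m j).trans ?_
  rw [one_mul]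
  have hj : (0:ℝ) < (j.factorial : ℝ) := by exact_mod_cast j.factorial_pos
  gcongr
  · linarith [abs_nonneg m]

lemma seqP_bound (m : ℝ) (j : ℕ) : |seqP m j| ≤ 1 * (2*|m|+2) ^ j / j.factorial := by
  cases j with
  | zero => simp [seqP]
  | succ j =>
    rw [one_mul]
    exact (abs_pow_ccf_le m j).trans (shifted_bound (abs_nonneg m) j)

lemma seqH_bound (m : ℝ) (j : ℕ) : |seqH m j| ≤ 1 * (2*|m|+2) ^ j / j.factorial := by
  cases j with
  | zero => simp [seqH]
  | succ j =>
    rw [one_mul]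
    refine le_trans ?_ ((abs_pow_ccf_le m j).trans (shifted_bound (abs_nonneg m) j))
    show |seqQ m j / ((j:ℝ)+1)| ≤ |m ^ j * ccf j|
    rw [abs_div, show |((j:ℝ)+1)| = (j:ℝ)+1 from abs_of_pos (by positivity)]
    calc |seqQ m j| / ((j:ℝ)+1) ≤ |seqQ m j| / 1 := by
          rw [div_one]
          apply div_le_self (abs_nonneg _) (by linarith [Nat.cast_nonneg (α := ℝ) j])
      _ = |m ^ j * ccf j| := by rw [div_one]; rfl

lemma seqQ'_bound (m : ℝ) (j : ℕ) :
    |((j:ℝ)+1) * seqQ m (j+1)| ≤ ((|m|+1)*(|m|+1)) * (|m|+1) ^ j / j.factorial := by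
  have hj : (0:ℝ) < (j.factorial : ℝ) := by exact_mod_cast j.factorial_pos
  have hfac : ((j+1).factorial : ℝ) = ((j:ℝ)+1) * j.factorial := by
    rw [Nat.factorial_succ]; push_cast; ring
  rw [abs_mul, show |((j:ℝ)+1)| = (j:ℝ)+1 from abs_of_pos (by positivity)]
  calc ((j:ℝ)+1) * |seqQ m (j+1)| ≤ ((j:ℝ)+1) * (|m| ^ (j+1) / (j+1).factorial) :=
        mul_le_mul_of_nonneg_left (abs_pow_ccf_le m (j+1)) (by positivity)
    _ = |m| ^ (j+1) / j.factorial := by rw [hfac]; field_simp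
    _ ≤ ((|m|+1)*(|m|+1)) * (|m|+1) ^ j / j.factorial := by
        gcongr ?_ / _
        calc |m| ^ (j+1) = |m| * |m| ^ j := by ring
          _ ≤ ((|m|+1)*(|m|+1)) * (|m|+1) ^ j := by
            have h1 : |m| ^ j ≤ (|m|+1) ^ j := pow_le_pow_left₀ (abs_nonneg m) (by linarith) j
            have h2 : (0 : ℝ) ≤ |m| := abs_nonneg m
            have h3 : (0:ℝ) ≤ |m| ^ j := pow_nonneg h2 j
            have h4 : (0:ℝ) ≤ (|m|+1) ^ j := pow_nonneg (by linarith) j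
            calc |m| * |m| ^ j ≤ (|m|+1) * (|m|+1) ^ j :=
                mul_le_mul (by linarith) h1 h3 (by linarith)
              _ ≤ ((|m|+1)*(|m|+1)) * (|m|+1) ^ j :=
                mul_le_mul_of_nonneg_right (by nlinarith) h4



lemma wright_eq (y : ℝ) : wright 1 2 y = ∑' j : ℕ, EKAux.ccf j * y ^ j := by
  unfold wright EKAux.ccf
  apply tsum_congr
  intro j
  have h : (1:ℝ) * j + 2 = ((j+1 : ℕ) : ℝ) + 1 := by push_cast; ring
  rw [h, Real.Gamma_nat_eq_factorial]
  ring

lemma reindex_deriv {a : ℕ → ℝ} {c q : ℝ} (hq : 0 ≤ q)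
    (h : ∀ j, |a j| ≤ c * q ^ j / j.factorial) (z : ℝ) :
    ∑' j : ℕ, a j * ((j:ℝ) * z ^ (j-1)) = ∑' j : ℕ, (((j:ℝ)+1) * a (j+1)) * z ^ j := by
  rw [Summable.tsum_eq_zero_add (summable_deriv_terms hq h z)]
  simp only [Nat.cast_zero, zero_mul, mul_zero, zero_add]
  apply tsum_congr
  intro j
  simp only [Nat.add_sub_cancel]
  push_cast
  ring

lemma ccf_succ_mul (j : ℕ) : ((j:ℝ)+1) * ccf j = 1 / ((j.factorial : ℝ) * j.factorial) := by
  unfold ccf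
  have hfac : ((j+1).factorial : ℝ) = ((j:ℝ)+1) * j.factorial := by
    rw [Nat.factorial_succ]; push_cast; ring
  have hj : (0:ℝ) < (j.factorial : ℝ) := by exact_mod_cast j.factorial_pos
  rw [hfac]
  field_simp

lemma seqP'_bound (m : ℝ) (j : ℕ) :
    |((j:ℝ)+1) * seqP m (j+1)| ≤ 1 * (|m|+1) ^ j / j.factorial := by
  have hj : (0:ℝ) < (j.factorial : ℝ) := by exact_mod_cast j.factorial_pos
  rw [one_mul]
  show |((j:ℝ)+1) * (m ^ j * ccf j)| ≤ (|m|+1) ^ j / j.factorial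
  have h1 : |((j:ℝ)+1) * (m ^ j * ccf j)| = |m| ^ j * (((j:ℝ)+1) * ccf j) := by
    rw [abs_mul, abs_mul, abs_pow, abs_of_nonneg (ccf_nonneg j),
      abs_of_pos (show (0:ℝ) < (j:ℝ)+1 by positivity)]
    ring
  rw [h1, ccf_succ_mul]
  have h2 : (1:ℝ) / ((j.factorial:ℝ) * j.factorial) ≤ 1 / j.factorial := by
    apply one_div_le_one_div_of_le hj
    have : (1:ℝ) ≤ (j.factorial:ℝ) := by exact_mod_cast j.factorial_pos
    nlinarith
  calc |m| ^ j * ((1:ℝ) / ((j.factorial:ℝ) * j.factorial))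
      ≤ |m| ^ j * (1 / j.factorial) :=
        mul_le_mul_of_nonneg_left h2 (pow_nonneg (abs_nonneg m) j)
    _ ≤ (|m|+1) ^ j * (1 / j.factorial) := by
        apply mul_le_mul_of_nonneg_right (pow_le_pow_left₀ (abs_nonneg m) (by linarith) j)
        positivity
    _ = (|m|+1) ^ j / j.factorial := by ring

lemma reindexH (m z : ℝ) :
    ∑' j : ℕ, seqH m j * ((j:ℝ) * z ^ (j-1)) = ∑' j : ℕ, seqQ m j * z ^ j := by
  rw [reindex_deriv (show (0:ℝ) ≤ 2*|m|+2 by positivity) (seqH_bound m) z]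
  apply tsum_congr
  intro j
  have hj : ((j:ℝ)+1) ≠ 0 := by positivity
  show (((j:ℝ)+1) * (seqQ m j / ((j:ℝ)+1))) * z ^ j = seqQ m j * z ^ j
  rw [mul_div_cancel₀ _ hj]

lemma key2 (k x t : ℝ) :
    ∑' j : ℕ, seqP (k*x) j * t ^ j = t * ∑' j : ℕ, seqQ (k*t) j * x ^ j := by
  rw [Summable.tsum_eq_zero_add (summable_bound (show (0:ℝ) ≤ 2*|k*x|+2 by positivity)
    (seqP_bound (k*x)) t)]
  rw [← tsum_mul_left]
  simp only [seqP, pow_zero, zero_mul, mul_one, zero_add]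
  apply tsum_congr
  intro j
  show ((k*x) ^ j * ccf j) * t ^ (j+1) = t * (seqQ (k*t) j * x ^ j)
  unfold seqQ
  ring

lemma key1 (k x t : ℝ) :
    ∑' j : ℕ, seqP (k*x) j * ((j:ℝ) * t ^ (j-1))
      = 1 + k * t * ∑' j : ℕ, seqH (k*t) j * x ^ j := by
  rw [reindex_deriv (show (0:ℝ) ≤ 2*|k*x|+2 by positivity) (seqP_bound (k*x)) t]
  rw [Summable.tsum_eq_zero_add (summable_bound (show (0:ℝ) ≤ |k*x|+1 by positivity)
    (seqP'_bound (k*x)) t)]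
  rw [Summable.tsum_eq_zero_add (summable_bound (show (0:ℝ) ≤ 2*|k*t|+2 by positivity)
    (seqH_bound (k*t)) x)]
  simp only [seqP, seqH, Nat.cast_zero, zero_add, pow_zero, mul_one, zero_mul, mul_zero]
  rw [← tsum_mul_left]
  have hc0 : (1:ℝ) * (1 * ccf 0) = 1 := by norm_num [ccf, Nat.factorial]
  rw [hc0]
  congr 1
  · apply tsum_congr
    intro j
    show (((j+1:ℕ):ℝ)+1) * ((k*x) ^ (j+1) * ccf (j+1)) * t ^ (j+1)
        = k * t * (seqQ (k*t) j / ((j:ℝ)+1) * x ^ (j+1))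

    unfold seqQ
    have hcc := cc_identity j
    push_cast
    linear_combination ((k*x) ^ (j+1) * t ^ (j+1)) * hcc

end EKAux

theorem exponential_kernel_theorem (α k : ℝ) (hα : α ∈ Set.Ioo (0:ℝ) 1)
    (hk : k = α / (1 - α)) (f : ℝ → ℝ → ℝ)
    (hf : ∀ x t : ℝ, f x t = k * t * Real.exp (-k * x - t) * wright 1 2 (k * x * t)) :
    (∀ x : ℝ, 0 < x → f x 0 = 0) ∧
    (∀ x : ℝ, 0 < x → ∀ t : ℝ, 0 ≤ t →
      deriv (f x) t =
        -(∫ z in (0:ℝ)..x, deriv (fun w => f w t) z * Real.exp (-k * (x - z))) +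
          k * (1 - t) * Real.exp (-t - k * x)) := by
  open EKAux in
  refine ⟨fun x hx => by rw [hf]; ring, fun x hx t ht => ?_⟩
  have bP : (0:ℝ) ≤ 2*|k*x|+2 := by positivity
  have bQ : (0:ℝ) ≤ |k*t|+1 := by positivity
  have bH : (0:ℝ) ≤ 2*|k*t|+2 := by positivity
  -- LHS
  have hfx : f x = fun s => k * Real.exp (-(k*x)) *
      (Real.exp (-s) * ∑' j : ℕ, seqP (k*x) j * s ^ j) := by
    funext s
    rw [hf x s, key2 k x s, wright_eq,
      show -k*x - s = (-(k*x)) + (-s) by ring, Real.exp_add]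
    rw [show (∑' j : ℕ, seqQ (k*s) j * x ^ j) = ∑' j : ℕ, ccf j * (k*x*s) ^ j from
      tsum_congr fun j => by unfold seqQ; ring]
    ring
  have hE : HasDerivAt (fun s : ℝ => Real.exp (-s)) (Real.exp (-t) * (-1)) t :=
    ((hasDerivAt_id t).neg).exp
  have hPd : HasDerivAt (fun s => ∑' j : ℕ, seqP (k*x) j * s ^ j)
      (∑' j : ℕ, seqP (k*x) j * ((j:ℝ) * t ^ (j-1))) t :=
    hasDerivAt_ps bP (seqP_bound (k*x)) t
  have hL : deriv (f x) t = k * Real.exp (-(k*x)) *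
      (Real.exp (-t) * (-1) * (∑' j : ℕ, seqP (k*x) j * t ^ j) +
        Real.exp (-t) * ∑' j : ℕ, seqP (k*x) j * ((j:ℝ) * t ^ (j-1))) := by
    rw [hfx]
    exact ((hE.mul hPd).const_mul (k * Real.exp (-(k*x)))).deriv
  -- integrand rewrite
  have hQraw : ∀ z : ℝ, HasDerivAt (fun w => ∑' j : ℕ, seqQ (k*t) j * w ^ j)
      (∑' j : ℕ, seqQ (k*t) j * ((j:ℝ) * z ^ (j-1))) z :=
    fun z => hasDerivAt_ps bQ (seqQ_bound (k*t)) z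
  have hfw : (fun w => f w t) = fun w => k * t * Real.exp (-t) *
      (Real.exp (-(k*w)) * ∑' j : ℕ, seqQ (k*t) j * w ^ j) := by
    funext w
    rw [hf w t, wright_eq, show -k*w - t = (-(k*w)) + (-t) by ring, Real.exp_add]
    rw [show (∑' j : ℕ, seqQ (k*t) j * w ^ j) = ∑' j : ℕ, ccf j * (k*w*t) ^ j from
      tsum_congr fun j => by unfold seqQ; ring]
    ring
  have hEk : ∀ z : ℝ, HasDerivAt (fun w : ℝ => Real.exp (-(k*w)))
      (Real.exp (-(k*z)) * (-k)) z := by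
    intro z
    have h1 : HasDerivAt (fun w : ℝ => -(k*w)) (-k) z := by
      simpa using ((hasDerivAt_id z).const_mul k).fun_neg
    exact h1.exp
  have hint : ∀ z : ℝ, deriv (fun w => f w t) z * Real.exp (-k*(x-z))
      = k * t * Real.exp (-t) * Real.exp (-(k*x)) *
        ((∑' j : ℕ, (((j:ℝ)+1) * seqQ (k*t) (j+1)) * z ^ j)
          - k * ∑' j : ℕ, seqQ (k*t) j * z ^ j) := by
    intro z
    rw [hfw]
    rw [(((hEk z).fun_mul (hQraw z)).const_mul (k * t * Real.exp (-t))).deriv]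
    rw [reindex_deriv bQ (seqQ_bound (k*t)) z]
    have hexp : Real.exp (-(k*z)) * Real.exp (-k*(x-z)) = Real.exp (-(k*x)) := by
      rw [← Real.exp_add]; ring_nf
    linear_combination (k * t * Real.exp (-t) *
      ((∑' j : ℕ, (((j:ℝ)+1) * seqQ (k*t) (j+1)) * z ^ j)
        - k * ∑' j : ℕ, seqQ (k*t) j * z ^ j)) * hexp
  -- FTC
  have hHd : ∀ z : ℝ, HasDerivAt (fun w => ∑' j : ℕ, seqH (k*t) j * w ^ j)
      (∑' j : ℕ, seqQ (k*t) j * z ^ j) z := by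
    intro z
    have := hasDerivAt_ps bH (seqH_bound (k*t)) z
    rwa [reindexH (k*t) z] at this
  have hQd : ∀ z : ℝ, HasDerivAt (fun w => ∑' j : ℕ, seqQ (k*t) j * w ^ j)
      (∑' j : ℕ, (((j:ℝ)+1) * seqQ (k*t) (j+1)) * z ^ j) z := by
    intro z
    have := hQraw z
    rwa [reindex_deriv bQ (seqQ_bound (k*t)) z] at this
  have hQ'd : ∀ z : ℝ, HasDerivAt (fun w => ∑' j : ℕ, (((j:ℝ)+1) * seqQ (k*t) (j+1)) * w ^ j)
      (∑' j : ℕ, (((j:ℝ)+1) * seqQ (k*t) (j+1)) * ((j:ℝ) * z ^ (j-1))) z :=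
    fun z => hasDerivAt_ps bQ (seqQ'_bound (k*t)) z
  have hcont : Continuous (fun z : ℝ => k * t * Real.exp (-t) * Real.exp (-(k*x)) *
      ((∑' j : ℕ, (((j:ℝ)+1) * seqQ (k*t) (j+1)) * z ^ j)
        - k * ∑' j : ℕ, seqQ (k*t) j * z ^ j)) := by
    apply continuous_const.mul
    apply Continuous.sub
    · exact continuous_iff_continuousAt.2 fun z => (hQ'd z).continuousAt
    · exact continuous_const.mul (continuous_iff_continuousAt.2 fun z => (hQraw z).continuousAt)
  have hI : (∫ z in (0:ℝ)..x, deriv (fun w => f w t) z * Real.exp (-k*(x-z)))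
      = (k * t * Real.exp (-t) * Real.exp (-(k*x)) *
          ((∑' j : ℕ, seqQ (k*t) j * x ^ j) - k * ∑' j : ℕ, seqH (k*t) j * x ^ j))
        - (k * t * Real.exp (-t) * Real.exp (-(k*x)) *
          ((∑' j : ℕ, seqQ (k*t) j * (0:ℝ) ^ j) - k * ∑' j : ℕ, seqH (k*t) j * (0:ℝ) ^ j)) := by
    simp only [hint]
    apply intervalIntegral.integral_eq_sub_of_hasDerivAt
      (f := fun z => k * t * Real.exp (-t) * Real.exp (-(k*x)) *
        ((∑' j : ℕ, seqQ (k*t) j * z ^ j) - k * ∑' j : ℕ, seqH (k*t) j * z ^ j))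
    · intro z hz
      exact ((hQd z).sub ((hHd z).const_mul k)).const_mul
        (k * t * Real.exp (-t) * Real.exp (-(k*x)))
    · exact hcont.intervalIntegrable 0 x
  have hQ0 : (∑' j : ℕ, seqQ (k*t) j * (0:ℝ) ^ j) = 1 := by
    rw [tsum_eq_single 0 (fun b hb => by simp [zero_pow hb])]
    norm_num [seqQ, ccf, Nat.factorial]
  have hH0 : (∑' j : ℕ, seqH (k*t) j * (0:ℝ) ^ j) = 0 := by
    rw [tsum_eq_single 0 (fun b hb => by simp [zero_pow hb])]
    simp [seqH]
  rw [hL, key1 k x t, key2 k x t, hI, hQ0, hH0,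
    show -t - k*x = (-t) + (-(k*x)) by ring, Real.exp_add]
  ring
end

section
/- Laplace transform of the exponential-kernel density. Let α∈(0,1), k=α/(1−α) and t≥0. Then for every η>0, ∫_0^∞ e^{−ηx} · k t e^{−kx−t} W_{1,2}(k x t) dx = e^{−η t/(η+k)} − e^{−t}. -/
open MeasureTheory Real Set

open scoped Nat

lemma myexp_tsum (x : ℝ) : Real.exp x = ∑' n : ℕ, x ^ n / n ! := by
  rw [Real.exp_eq_exp_ℝ, NormedSpace.exp_eq_tsum_div]

lemma my_integrable {c : ℝ} (hc : 0 < c) (j : ℕ) :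
    IntegrableOn (fun x : ℝ => x ^ j * Real.exp (-(c * x))) (Ioi 0) := by
  have h := integrableOn_rpow_mul_exp_neg_mul_rpow (p := 1) (s := (j : ℝ)) (b := c)
    (neg_one_lt_zero.trans_le (Nat.cast_nonneg j)) one_pos hc
  simpa [Real.rpow_natCast, Real.rpow_one, neg_mul] using h

lemma my_integral {c : ℝ} (hc : 0 < c) (j : ℕ) :
    ∫ x in Ioi (0:ℝ), x ^ j * Real.exp (-(c * x)) = (j ! : ℝ) / c ^ (j + 1) := by
  have h := Real.integral_rpow_mul_exp_neg_mul_Ioi (a := (j : ℝ) + 1) (r := c)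
    (by positivity) hc
  rw [add_sub_cancel_right] at h
  simp_rw [Real.rpow_natCast] at h
  rw [h, show ((j : ℝ) + 1) = ((j + 1 : ℕ) : ℝ) by push_cast; ring,
    Real.rpow_natCast, ← Real.Gamma_nat_eq_factorial j]
  rw [show ((j + 1 : ℕ) : ℝ) = (j : ℝ) + 1 by push_cast; ring]
  field_simp
  rw [← mul_pow, one_div_mul_cancel hc.ne', one_pow]


theorem laplace_exponential_kernel_density (α k t : ℝ) (hα : α ∈ Set.Ioo (0:ℝ) 1)
    (hk : k = α / (1 - α)) (ht : 0 ≤ t) :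
    ∀ η : ℝ, 0 < η →
      (∫ x in Set.Ioi (0:ℝ),
        Real.exp (-η * x) * (k * t * Real.exp (-k * x - t) * wright 1 2 (k * x * t))) =
      Real.exp (-η * t / (η + k)) - Real.exp (-t) := by
  obtain ⟨hα0, hα1⟩ := hα
  have hk0 : 0 < k := hk ▸ div_pos hα0 (by linarith)
  intro η hη
  set c : ℝ := η + k with hcdef
  have hc : 0 < c := by positivity
  set u : ℝ := k * t / c with hu
  have hu0 : 0 ≤ u := by positivity
  set F : ℕ → ℝ → ℝ :=
    fun j x => (k * t * Real.exp (-t) * (k * t) ^ j / ((j ! : ℝ) * ((j+1)! : ℝ)))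
      * (x ^ j * Real.exp (-(c * x))) with hF
  have hfac : ∀ j : ℕ, (0:ℝ) < (j ! : ℝ) := fun j => by positivity
  -- pointwise identity on Ioi 0
  have hpt : EqOn
      (fun x => Real.exp (-η * x) * (k * t * Real.exp (-k * x - t) * wright 1 2 (k * x * t)))
      (fun x => ∑' j : ℕ, F j x) (Ioi 0) := by
    intro x hx
    simp only [wright]
    rw [← tsum_mul_left, ← tsum_mul_left]
    refine tsum_congr fun j => ?_
    have hΓ : Real.Gamma (1 * (j : ℝ) + 2) = ((j+1)! : ℝ) := by
      rw [show (1 * (j:ℝ) + 2) = ((j + 1 : ℕ) : ℝ) + 1 by push_cast; ring,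
        Real.Gamma_nat_eq_factorial]
    rw [hΓ, hF]
    have he : Real.exp (-η * x) * Real.exp (-k * x - t)
        = Real.exp (-t) * Real.exp (-(c * x)) := by
      rw [← Real.exp_add, ← Real.exp_add]; congr 1; rw [hcdef]; ring
    rw [show k * x * t = (k * t) * x by ring, mul_pow]
    field_simp
    ring_nf
    ring_nf at he
    linear_combination (t * ((k*t)^j * x^j)) * he
  rw [setIntegral_congr_fun measurableSet_Ioi hpt]
  have hFint : ∀ j, IntegrableOn (F j) (Ioi 0) := fun j =>
    (my_integrable hc j).const_mul _
  have hInt : ∀ j, ∫ x in Ioi (0:ℝ), F j x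
      = Real.exp (-t) * (u ^ (j+1) / ((j+1)! : ℝ)) := by
    intro j
    rw [hF]
    simp only []
    rw [MeasureTheory.integral_const_mul, my_integral hc j, hu, div_pow]
    have h1 := hfac j
    have h2 := hfac (j+1)
    have hcp : (0:ℝ) < c ^ (j+1) := by positivity
    field_simp
    ring
  have hnnterm : ∀ j : ℕ, 0 ≤ Real.exp (-t) * (u ^ (j+1) / ((j+1)! : ℝ)) := by
    intro j; positivity
  have hsummable : Summable (fun j : ℕ => Real.exp (-t) * (u ^ (j+1) / ((j+1)! : ℝ))) := by
    exact ((summable_nat_add_iff 1).2 (Real.summable_pow_div_factorial u)).mul_left _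
  have hswap : (∫ x in Ioi (0:ℝ), ∑' j : ℕ, F j x) = ∑' j : ℕ, ∫ x in Ioi (0:ℝ), F j x := by
    refine MeasureTheory.integral_tsum (fun j => ?_) ?_
    · exact ((continuous_const.mul ((continuous_pow j).mul
        (Real.continuous_exp.comp (by fun_prop)))).aestronglyMeasurable)
    · have hlint : ∀ j : ℕ, ∫⁻ x in Ioi (0:ℝ), ‖F j x‖ₑ
          = ENNReal.ofReal (Real.exp (-t) * (u ^ (j+1) / ((j+1)! : ℝ))) := by
        intro j
        have hnn : 0 ≤ᵐ[volume.restrict (Ioi (0:ℝ))] F j := by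
          refine ae_restrict_of_forall_mem measurableSet_Ioi fun x hx => ?_
          have hx0 : (0:ℝ) < x := hx
          have h1 := hfac j
          have h2 := hfac (j+1)
          have hkt : (0:ℝ) ≤ k * t := by positivity
          rw [hF]; positivity
        calc ∫⁻ x in Ioi (0:ℝ), ‖F j x‖ₑ
            = ∫⁻ x in Ioi (0:ℝ), ENNReal.ofReal (F j x) := by
              refine lintegral_congr_ae (hnn.mono fun x hx => ?_)
              exact Real.enorm_eq_ofReal hx
          _ = ENNReal.ofReal (∫ x in Ioi (0:ℝ), F j x) :=
              (MeasureTheory.ofReal_integral_eq_lintegral_ofReal (hFint j) hnn).symm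
          _ = _ := by rw [hInt j]
      simp_rw [hlint]
      rw [← ENNReal.ofReal_tsum_of_nonneg hnnterm hsummable]
      exact ENNReal.ofReal_ne_top
  rw [hswap]
  rw [tsum_congr hInt, tsum_mul_left]
  have hshift : ∑' j : ℕ, u ^ (j+1) / ((j+1)! : ℝ) = Real.exp u - 1 := by
    have h := Summable.tsum_eq_zero_add (Real.summable_pow_div_factorial u)
    rw [myexp_tsum u, h]
    simp
  rw [hshift, mul_sub, mul_one, ← Real.exp_add,
    show -t + u = -η * t / c by rw [hu, hcdef]; field_simp; ring]
end

section
/- Operator identity for the exponential-kernel density (Remark 2). Let α∈(0,1), k=α/(1−α), and let f(x,t) = k t e^{−kx−t} W_{1,2}(k x t). Then for all x>0 and t≥0, ∫_0^x (∂f/∂z)(z,t) e^{−k(x−z)} dz = k t e^{−t−kx} Σ_{n=1}^∞ (k t x)^n/(n!(n+1)!) − k e^{−t−kx} Σ_{l=1}^∞ (k t x)^l/(l!)^2. -/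
open MeasureTheory Real Set

private lemma wsum_summable {c : ℕ → ℝ} {C M : ℝ}
    (hc : ∀ j, |c j| ≤ C * M ^ j / (Nat.factorial j : ℝ)) (y : ℝ) :
    Summable fun j : ℕ => c j * y ^ j := by
  refine Summable.of_norm (Summable.of_nonneg_of_le (fun j => norm_nonneg _) (fun j => ?_)
    ((Real.summable_pow_div_factorial (M * |y|)).mul_left C))
  have h1 : ‖c j * y ^ j‖ = |c j| * |y| ^ j := by
    rw [Real.norm_eq_abs, abs_mul, abs_pow]
  rw [h1]
  have h2 : |c j| * |y| ^ j ≤ (C * M ^ j / (Nat.factorial j : ℝ)) * |y| ^ j :=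
    mul_le_mul_of_nonneg_right (hc j) (pow_nonneg (abs_nonneg y) j)
  refine h2.trans_eq ?_
  rw [mul_pow]; ring

private lemma wsum_hasDerivAt {c : ℕ → ℝ} {C M : ℝ} (hC : 0 ≤ C) (hM : 1 ≤ M)
    (hc : ∀ j, |c j| ≤ C * M ^ j / (Nat.factorial j : ℝ)) (y : ℝ) :
    HasDerivAt (fun z : ℝ => ∑' j : ℕ, c j * z ^ j)
      (∑' j : ℕ, ((j : ℝ) + 1) * c (j + 1) * y ^ j) y := by
  set R : ℝ := |y| + 1 with hRdef
  have hR1 : 1 ≤ R := by have := abs_nonneg y; simp only [hRdef]; linarith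
  have hR0 : 0 < R := lt_of_lt_of_le one_pos hR1
  have hM0 : 0 ≤ M := le_trans zero_le_one hM
  set u : ℕ → ℝ := fun j => C * (j : ℝ) * (M * R) ^ j / (Nat.factorial j : ℝ) with hu_def
  have hu : Summable u := by
    refine Summable.of_nonneg_of_le (fun j => ?_) (fun j => ?_)
      ((Real.summable_pow_div_factorial (2 * (M * R))).mul_left C)
    · have : (0:ℝ) ≤ (M * R) ^ j := pow_nonneg (by positivity) j
      positivity
    · have hj : (j : ℝ) ≤ 2 ^ j := by exact_mod_cast (Nat.lt_two_pow_self (n := j)).le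
      have hfac : (0:ℝ) < (Nat.factorial j : ℝ) := by exact_mod_cast j.factorial_pos
      rw [hu_def]
      have : C * (j : ℝ) * (M * R) ^ j ≤ C * (2 * (M * R)) ^ j := by
        have h2 : (j:ℝ) * (M * R) ^ j ≤ 2 ^ j * (M * R) ^ j :=
          mul_le_mul_of_nonneg_right hj (pow_nonneg (by positivity) j)
        calc C * (j : ℝ) * (M * R) ^ j = C * ((j:ℝ) * (M*R)^j) := by ring
          _ ≤ C * (2 ^ j * (M*R)^j) := mul_le_mul_of_nonneg_left h2 hC
          _ = C * (2 * (M * R)) ^ j := by simp only [mul_pow]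
      calc C * (j : ℝ) * (M * R) ^ j / (Nat.factorial j : ℝ)
          ≤ C * (2 * (M * R)) ^ j / (Nat.factorial j : ℝ) :=
            div_le_div_of_nonneg_right this hfac.le
        _ = C * ((2 * (M * R)) ^ j / (Nat.factorial j : ℝ)) := by ring
  have hball : y ∈ Metric.ball (0:ℝ) R := by
    simp [Real.dist_eq, hRdef]
  have key : ∀ z : ℝ, z ∈ Metric.ball (0:ℝ) R → ∀ j : ℕ,
      ‖c j * ((j : ℝ) * z ^ (j - 1))‖ ≤ u j := by
    intro z hz j
    have hzR : |z| ≤ R := by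
      have := Metric.mem_ball.1 hz
      rw [Real.dist_eq, sub_zero] at this
      exact this.le
    have hzR0 : (0:ℝ) ≤ |z| := abs_nonneg z
    have hfac : (0:ℝ) < (Nat.factorial j : ℝ) := by exact_mod_cast j.factorial_pos
    have h1 : ‖c j * ((j : ℝ) * z ^ (j - 1))‖ = (j:ℝ) * |c j| * |z| ^ (j-1) := by
      rw [Real.norm_eq_abs, abs_mul, abs_mul, abs_pow, Nat.abs_cast]; ring
    rw [h1]
    have h2 : |z| ^ (j - 1) ≤ R ^ j :=
      le_trans (pow_le_pow_left₀ hzR0 hzR _) (pow_le_pow_right₀ hR1 (Nat.sub_le j 1))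
    have h3 : (j:ℝ) * |c j| * |z| ^ (j-1) ≤ (j:ℝ) * (C * M ^ j / (Nat.factorial j : ℝ)) * R ^ j := by
      have := mul_le_mul (mul_le_mul_of_nonneg_left (hc j) (Nat.cast_nonneg j)) h2
        (pow_nonneg hzR0 _) (by positivity)
      linarith [this]
    refine h3.trans_eq ?_
    simp only [hu_def, mul_pow]
    field_simp
  have hg : ∀ j : ℕ, ∀ z : ℝ, z ∈ Metric.ball (0:ℝ) R →
      HasDerivAt (fun w : ℝ => c j * w ^ j) (c j * ((j:ℝ) * z ^ (j-1))) z :=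
    fun j z _ => (hasDerivAt_pow j z).const_mul (c j)
  have hd := hasDerivAt_tsum_of_isPreconnected hu Metric.isOpen_ball
    (convex_ball (0:ℝ) R).isPreconnected hg (fun j z hz => key z hz j) hball
    (wsum_summable hc y) hball
  have hsum' : Summable fun j : ℕ => c j * ((j:ℝ) * y ^ (j-1)) :=
    Summable.of_norm (Summable.of_nonneg_of_le (fun j => norm_nonneg _)
      (fun j => key y hball j) hu)
  have heq : (∑' j : ℕ, c j * ((j:ℝ) * y ^ (j-1)))
      = ∑' j : ℕ, ((j : ℝ) + 1) * c (j + 1) * y ^ j := by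
    rw [Summable.tsum_eq_zero_add hsum']
    simp only [Nat.cast_zero, zero_mul, mul_zero, zero_add]
    refine tsum_congr fun n => ?_
    push_cast
    ring_nf
  exact heq ▸ hd

private lemma wsum_continuous {c : ℕ → ℝ} {C M : ℝ} (hC : 0 ≤ C) (hM : 1 ≤ M)
    (hc : ∀ j, |c j| ≤ C * M ^ j / (Nat.factorial j : ℝ)) :
    Continuous (fun z : ℝ => ∑' j : ℕ, c j * z ^ j) :=
  continuous_iff_continuousAt.2 fun y => (wsum_hasDerivAt hC hM hc y).continuousAt

private noncomputable def wcoef (j : ℕ) : ℝ :=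
  ((Nat.factorial j : ℝ) * (Nat.factorial (j+1) : ℝ))⁻¹

private noncomputable def wcoef' (j : ℕ) : ℝ := ((j : ℝ) + 1) * wcoef (j + 1)

private noncomputable def bcoef (κ : ℝ) : ℕ → ℝ
  | 0 => 0
  | j + 1 => wcoef j * κ ^ j / ((j : ℝ) + 1)

private lemma fac_pos (j : ℕ) : (0:ℝ) < (Nat.factorial j : ℝ) := by
  exact_mod_cast j.factorial_pos

private lemma fac_one_le (j : ℕ) : (1:ℝ) ≤ (Nat.factorial j : ℝ) := by
  exact_mod_cast j.factorial_pos

private lemma wcoef_pos (j : ℕ) : 0 < wcoef j := by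
  unfold wcoef; positivity

private lemma wcoef_bound (j : ℕ) : |wcoef j| ≤ 1 * 1 ^ j / (Nat.factorial j : ℝ) := by
  rw [abs_of_pos (wcoef_pos j), one_pow, one_mul, one_div, wcoef]
  exact inv_anti₀ (fac_pos j)
    (le_mul_of_one_le_right (fac_pos j).le (fac_one_le (j+1)))

private lemma wcoef'_eq (j : ℕ) :
    wcoef' j = ((Nat.factorial j : ℝ) * (Nat.factorial (j+2) : ℝ))⁻¹ := by
  unfold wcoef' wcoef
  have h1 : (Nat.factorial (j+1) : ℝ) = ((j:ℝ)+1) * (Nat.factorial j : ℝ) := by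
    push_cast [Nat.factorial_succ]; ring
  have hj : ((j:ℝ)+1) ≠ 0 := by positivity
  rw [h1]
  rw [show j + 1 + 1 = j + 2 from rfl]
  field_simp

private lemma wcoef'_pos (j : ℕ) : 0 < wcoef' j := by
  rw [wcoef'_eq]; positivity

private lemma wcoef'_bound (j : ℕ) : |wcoef' j| ≤ 1 * 1 ^ j / (Nat.factorial j : ℝ) := by
  rw [abs_of_pos (wcoef'_pos j), one_pow, one_mul, one_div, wcoef'_eq]
  exact inv_anti₀ (fac_pos j)
    (le_mul_of_one_le_right (fac_pos j).le (fac_one_le (j+2)))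

private lemma bcoef_bound (κ : ℝ) (hκ : 0 ≤ κ) (j : ℕ) :
    |bcoef κ j| ≤ 1 * (max 1 κ) ^ j / (Nat.factorial j : ℝ) := by
  cases j with
  | zero => simp [bcoef]
  | succ j =>
    have hM1 : (1:ℝ) ≤ max 1 κ := le_max_left _ _
    have hMκ : κ ≤ max 1 κ := le_max_right _ _
    have hw := wcoef_pos j
    have hb : (0:ℝ) ≤ wcoef j * κ ^ j / ((j:ℝ)+1) := by positivity
    show |wcoef j * κ ^ j / ((j:ℝ)+1)| ≤ _
    rw [abs_of_nonneg hb, one_mul]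
    have h1 : wcoef j ≤ ((Nat.factorial (j+1) : ℝ))⁻¹ := by
      rw [wcoef]
      exact inv_anti₀ (fac_pos _)
        (le_mul_of_one_le_left (fac_pos _).le (fac_one_le j))
    have h2 : κ ^ j ≤ (max 1 κ) ^ (j+1) :=
      le_trans (pow_le_pow_left₀ hκ hMκ j) (pow_le_pow_right₀ hM1 (Nat.le_succ j))
    have h3 : wcoef j * κ ^ j / ((j:ℝ)+1) ≤ wcoef j * κ ^ j :=
      div_le_self (by positivity) (by linarith [Nat.cast_nonneg (α := ℝ) j])
    refine h3.trans ?_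
    calc wcoef j * κ ^ j ≤ ((Nat.factorial (j+1) : ℝ))⁻¹ * (max 1 κ)^(j+1) :=
          mul_le_mul h1 h2 (pow_nonneg hκ j) (by positivity)
      _ = (max 1 κ)^(j+1) / (Nat.factorial (j+1) : ℝ) := by ring

theorem operator_identity_exponential_kernel (α k : ℝ) (hα : α ∈ Set.Ioo (0:ℝ) 1)
    (hk : k = α / (1 - α)) (f : ℝ → ℝ → ℝ)
    (hf : ∀ x t : ℝ, f x t = k * t * Real.exp (-k * x - t) * wright 1 2 (k * x * t)) :
    ∀ x : ℝ, 0 < x → ∀ t : ℝ, 0 ≤ t →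
      (∫ z in (0:ℝ)..x, deriv (fun w => f w t) z * Real.exp (-k * (x - z))) =
        k * t * Real.exp (-t - k * x) *
            (∑' n : ℕ, (k * t * x) ^ (n + 1) /
              ((Nat.factorial (n + 1) : ℝ) * (Nat.factorial (n + 2) : ℝ))) -
          k * Real.exp (-t - k * x) *
            (∑' l : ℕ, (k * t * x) ^ (l + 1) / ((Nat.factorial (l + 1) : ℝ)) ^ 2) := by
  intro x hx t ht
  have hk0 : 0 < k := by
    rw [hk]; exact div_pos hα.1 (by linarith [hα.2])
  have hkt : 0 ≤ k * t := mul_nonneg hk0.le ht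
  set W : ℝ → ℝ := fun y => ∑' j : ℕ, wcoef j * y ^ j with hWdef
  set W' : ℝ → ℝ := fun y => ∑' j : ℕ, wcoef' j * y ^ j with hW'def
  set A : ℝ → ℝ := fun z => ∑' j : ℕ, bcoef (k * t) j * z ^ j with hAdef
  set φ : ℝ → ℝ := fun z => k * t * Real.exp (-t) * W (k * t * z) with hφdef
  set φ' : ℝ → ℝ := fun z => k * t * Real.exp (-t) * (k * t * W' (k * t * z)) with hφ'def
  -- wright = W
  have hWright : ∀ u : ℝ, wright 1 2 u = W u := by
    intro u
    unfold wright
    refine tsum_congr fun j => ?_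
    have hg : Real.Gamma (1 * j + 2) = (Nat.factorial (j + 1) : ℝ) := by
      rw [show (1:ℝ) * j + 2 = ((j + 1 : ℕ) : ℝ) + 1 by push_cast; ring,
        Real.Gamma_nat_eq_factorial]
    rw [hg, wcoef, div_eq_mul_inv, mul_comm]
  -- derivatives
  have hWd : ∀ y : ℝ, HasDerivAt W (W' y) y := by
    intro y
    have h := wsum_hasDerivAt (c := wcoef) zero_le_one le_rfl wcoef_bound y
    convert h using 1
    rfl
  have hWc : Continuous W := wsum_continuous zero_le_one le_rfl wcoef_bound
  have hW'c : Continuous W' := wsum_continuous zero_le_one le_rfl wcoef'_bound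
  have hφd : ∀ z : ℝ, HasDerivAt φ (φ' z) z := by
    intro z
    have h1 : HasDerivAt (fun w : ℝ => k * t * w) (k * t) z := by
      simpa using (hasDerivAt_id z).const_mul (k * t)
    have h2 : HasDerivAt (fun w : ℝ => W (k * t * w)) (W' (k * t * z) * (k * t)) z :=
      (hWd (k * t * z)).comp z h1
    have h3 := h2.const_mul (k * t * Real.exp (-t))
    refine h3.congr_deriv ?_
    simp only [hφ'def]; ring
  have hφc : Continuous φ :=
    continuous_const.mul (hWc.comp (continuous_const.mul continuous_id))
  have hφ'c : Continuous φ' :=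
    continuous_const.mul (continuous_const.mul
      (hW'c.comp (continuous_const.mul continuous_id)))
  -- f in terms of φ
  have hfφ : (fun w => f w t) = fun w => Real.exp (-(k * w)) * φ w := by
    funext w
    rw [hf w t, hWright]
    simp only [hφdef]
    rw [show k * w * t = k * t * w by ring,
      show -k * w - t = -(k * w) + -t by ring, Real.exp_add]
    ring
  have hD : ∀ z : ℝ, HasDerivAt (fun w => f w t)
      (Real.exp (-(k * z)) * (φ' z - k * φ z)) z := by
    intro z
    rw [hfφ]
    have h1 : HasDerivAt (fun w : ℝ => -(k * w)) (-k) z := by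
      exact ((hasDerivAt_id' z).const_mul k).neg.congr_deriv (by ring)
    have he : HasDerivAt (fun w : ℝ => Real.exp (-(k * w)))
        (Real.exp (-(k * z)) * -k) z := h1.exp
    have := he.mul (hφd z)
    refine this.congr_deriv ?_
    ring
  have hinteg : ∀ z : ℝ, deriv (fun w => f w t) z * Real.exp (-k * (x - z))
      = Real.exp (-(k * x)) * (φ' z - k * φ z) := by
    intro z
    rw [(hD z).deriv]
    rw [show Real.exp (-(k * z)) * (φ' z - k * φ z) * Real.exp (-k * (x - z))
        = (Real.exp (-(k * z)) * Real.exp (-k * (x - z))) * (φ' z - k * φ z) by ring,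
      ← Real.exp_add, show -(k * z) + -k * (x - z) = -(k * x) by ring]
  -- A is an antiderivative of z ↦ W (k t z)
  have hAd : ∀ z : ℝ, HasDerivAt A (W (k * t * z)) z := by
    intro z
    have h := wsum_hasDerivAt (c := bcoef (k * t)) zero_le_one
      (le_max_left 1 (k * t)) (bcoef_bound (k * t) hkt) z
    convert h using 1
    simp only [hWdef]
    refine tsum_congr fun j => ?_
    simp only [bcoef]
    have hj : ((j:ℝ) + 1) ≠ 0 := by positivity
    rw [mul_pow]
    field_simp
  -- FTC
  have hI1 : (∫ z in (0:ℝ)..x, φ' z) = φ x - φ 0 :=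
    intervalIntegral.integral_eq_sub_of_hasDerivAt (fun z _ => hφd z)
      (hφ'c.intervalIntegrable 0 x)
  have hI2 : (∫ z in (0:ℝ)..x, W (k * t * z)) = A x - A 0 :=
    intervalIntegral.integral_eq_sub_of_hasDerivAt (fun z _ => hAd z)
      ((hWc.comp (continuous_const.mul continuous_id)).intervalIntegrable 0 x)
  have hφint : (∫ z in (0:ℝ)..x, φ z) = k * t * Real.exp (-t) * (A x - A 0) := by
    rw [← hI2, ← intervalIntegral.integral_const_mul]
  have step1 : (∫ z in (0:ℝ)..x, deriv (fun w => f w t) z * Real.exp (-k * (x - z)))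
      = Real.exp (-(k * x)) * ((φ x - φ 0) - k * (k * t * Real.exp (-t) * (A x - A 0))) := by
    simp_rw [hinteg]
    rw [intervalIntegral.integral_const_mul,
      intervalIntegral.integral_sub (hφ'c.intervalIntegrable 0 x)
        ((hφc.intervalIntegrable 0 x).const_mul k),
      hI1, intervalIntegral.integral_const_mul, hφint]
  -- special values
  have hW0 : W 0 = 1 := by
    simp only [hWdef]
    rw [tsum_eq_single 0 (fun j hj => by
      rw [zero_pow hj, mul_zero])]
    simp [wcoef]
  have hφ0 : φ 0 = k * t * Real.exp (-t) := by
    simp only [hφdef]; rw [mul_zero, hW0, mul_one]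
  have hA0 : A 0 = 0 := by
    simp only [hAdef]
    rw [tsum_eq_single 0 (fun j hj => by rw [zero_pow hj, mul_zero])]
    simp [bcoef]
  -- the two series
  set T1 : ℝ := ∑' n : ℕ, (k * t * x) ^ (n + 1) /
      ((Nat.factorial (n + 1) : ℝ) * (Nat.factorial (n + 2) : ℝ)) with hT1
  set T2 : ℝ := ∑' l : ℕ, (k * t * x) ^ (l + 1) / ((Nat.factorial (l + 1) : ℝ)) ^ 2 with hT2
  have hWx : W (k * t * x) = 1 + T1 := by
    simp only [hWdef]
    rw [Summable.tsum_eq_zero_add (wsum_summable wcoef_bound (k * t * x))]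
    congr 1
    · simp [wcoef]
    · rw [hT1]
      refine tsum_congr fun n => ?_
      rw [wcoef, div_eq_mul_inv, mul_comm]
  have hAx' : A x = ∑' n : ℕ, bcoef (k * t) (n + 1) * x ^ (n + 1) := by
    simp only [hAdef]
    rw [Summable.tsum_eq_zero_add (wsum_summable (bcoef_bound (k * t) hkt) x)]
    simp [bcoef]
  have hAx : k * t * A x = T2 := by
    rw [hAx', ← tsum_mul_left, hT2]
    refine tsum_congr fun l => ?_
    simp only [bcoef, wcoef]
    have hfs : (Nat.factorial (l + 1) : ℝ) = ((l:ℝ) + 1) * (Nat.factorial l : ℝ) := by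
      push_cast [Nat.factorial_succ]; ring
    have hj : ((l:ℝ) + 1) ≠ 0 := by positivity
    rw [mul_pow, hfs]
    field_simp
    ring
  have hAx2 : k * (k * t * Real.exp (-t) * A x) = k * Real.exp (-t) * T2 := by
    rw [← hAx]; ring
  have hφx : φ x = k * t * Real.exp (-t) * (1 + T1) := by
    simp only [hφdef]; rw [hWx]
  rw [step1, hA0, sub_zero, hAx2, hφx, hφ0,
    show Real.exp (-t - k * x) = Real.exp (-t) * Real.exp (-(k * x)) by
      rw [← Real.exp_add]; ring_nf]
  ring
end

section
/- Laplace transform of the Mittag-Leffler-kernel density. Let α∈(0,1), ν∈(0,1], k=α/(1−α), t≥0. Then for every η>0 with η^ν > k, ∫_0^∞ e^{−ηx} · (e^{−t}/x) Σ_{n=1}^∞ ((k t x^ν)^n/n!) E^n_{ν,νn}(−k x^ν) dx = e^{−η^ν t/(η^ν+k)} − e^{−t}. -/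
open MeasureTheory Real Set

lemma risingFactorial_succ (γ : ℝ) (j : ℕ) :
    risingFactorial γ (j + 1) = risingFactorial γ j * (γ + j) := by
  simp [risingFactorial, Finset.prod_range_succ]

lemma risingFactorial_mul_factorial (n j : ℕ) :
    risingFactorial ((n : ℝ) + 1) j * (Nat.factorial n : ℝ) = (Nat.factorial (j + n) : ℝ) := by
  induction j with
  | zero => simp [risingFactorial]
  | succ j ih =>
    rw [risingFactorial_succ]
    have h : (Nat.factorial (j + 1 + n) : ℝ) = (Nat.factorial (j + n) : ℝ) * ((n : ℝ) + 1 + j) := by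
      have : j + 1 + n = (j + n) + 1 := by omega
      rw [this, Nat.factorial_succ]; push_cast; ring
    rw [h, ← ih]; ring

lemma risingFactorial_eq_choose_mul_factorial (n j : ℕ) :
    risingFactorial ((n : ℝ) + 1) j = ((j + n).choose n : ℝ) * (Nat.factorial j : ℝ) := by
  have h := Nat.choose_mul_factorial_mul_factorial (Nat.le_add_left n j)
  have h' : ((j + n).choose n : ℝ) * (Nat.factorial n : ℝ) * (Nat.factorial j : ℝ)
      = (Nat.factorial (j + n) : ℝ) := by
    have : j + n - n = j := by omega
    rw [this] at h
    exact_mod_cast congrArg (Nat.cast : ℕ → ℝ) h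
  have hn : (Nat.factorial n : ℝ) ≠ 0 := by positivity
  apply mul_right_cancel₀ hn
  rw [risingFactorial_mul_factorial n j, ← h']; ring

lemma choose_succ_le_mul (n j : ℕ) :
    ((j + 1 + n).choose n : ℝ) ≤ ((n : ℝ) + 1) * ((j + n).choose n : ℝ) := by
  have h1 : (j + n + 1).choose (j + 1) = (j + n + 1).choose n := by
    have := Nat.choose_symm (show n ≤ j + n + 1 by omega)
    simpa [show j + n + 1 - n = j + 1 by omega] using this
  have h2 : (j + n).succ * (j + n).choose j = (j + n + 1).choose (j + 1) * (j + 1) :=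
    Nat.add_one_mul_choose_eq (j + n) j
  have h3 : (j + n).choose j = (j + n).choose n := by
    have := Nat.choose_symm (show j ≤ j + n by omega)
    simpa [show j + n - j = n by omega] using this.symm
  have key : (j + 1 + n).choose n * (j + 1) = (j + n + 1) * (j + n).choose n := by
    rw [show j + 1 + n = j + n + 1 by omega, ← h1, ← h2, h3, Nat.succ_eq_add_one]
  have hnat : (j + 1 + n).choose n * (j + 1) ≤ ((n + 1) * (j + n).choose n) * (j + 1) := by
    rw [key]
    have : j + n + 1 ≤ (n + 1) * (j + 1) := by nlinarith
    calc (j + n + 1) * (j + n).choose n ≤ ((n + 1) * (j + 1)) * (j + n).choose n :=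
          Nat.mul_le_mul_right _ this
      _ = (n + 1) * (j + n).choose n * (j + 1) := by ring
  have := Nat.le_of_mul_le_mul_right hnat (by omega)
  exact_mod_cast this

lemma Gamma_mul_rpow_le (ν s : ℝ) (hν0 : 0 < ν) (hν1 : ν ≤ 1) (hs : 1 < s) :
    Real.Gamma s * (s + ν - 1) ^ ν ≤ Real.Gamma (s + ν) := by
  have hs0 : (0:ℝ) < s := lt_trans one_pos hs
  have hu : (0:ℝ) < s + ν - 1 := by linarith
  have hsv : (0:ℝ) < s + ν := by linarith
  have hG1 : 0 < Real.Gamma s := Real.Gamma_pos_of_pos hs0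
  have hG2 : 0 < Real.Gamma (s + ν) := Real.Gamma_pos_of_pos hsv
  have hG3 : 0 < Real.Gamma (s + ν - 1) := Real.Gamma_pos_of_pos hu
  have hconv := Real.convexOn_log_Gamma.2 (mem_Ioi.mpr hsv) (mem_Ioi.mpr hu)
    (by linarith : (0:ℝ) ≤ 1 - ν) hν0.le (by ring)
  have harg : (1 - ν) • (s + ν) + ν • (s + ν - 1) = s := by
    simp only [smul_eq_mul]; ring
  rw [harg] at hconv
  simp only [Function.comp_apply, smul_eq_mul] at hconv
  have hGadd : Real.Gamma (s + ν) = (s + ν - 1) * Real.Gamma (s + ν - 1) := by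
    have := Real.Gamma_add_one (s := s + ν - 1) hu.ne'
    rw [show s + ν - 1 + 1 = s + ν by ring] at this
    exact this
  have hlog : Real.log (Real.Gamma (s + ν - 1))
      = Real.log (Real.Gamma (s + ν)) - Real.log (s + ν - 1) := by
    rw [hGadd, Real.log_mul hu.ne' hG3.ne']; ring
  rw [hlog] at hconv
  have hfin : Real.log (Real.Gamma s) + ν * Real.log (s + ν - 1)
      ≤ Real.log (Real.Gamma (s + ν)) := by linarith
  have hlhs : Real.Gamma s * (s + ν - 1) ^ ν
      = Real.exp (Real.log (Real.Gamma s) + ν * Real.log (s + ν - 1)) := by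
    rw [Real.exp_add, Real.exp_log hG1, ← Real.exp_log (Real.rpow_pos_of_pos hu ν),
      Real.log_rpow hu]
  rw [hlhs, ← Real.exp_log hG2]
  exact Real.exp_le_exp.mpr hfin

lemma summable_choose_pow_div_Gamma (ν b y : ℝ) (n : ℕ) (hν0 : 0 < ν) (hν1 : ν ≤ 1)
    (hb : 0 < b) (hy : 0 ≤ y) :
    Summable fun j : ℕ => ((j + n).choose n : ℝ) * y ^ j / Real.Gamma (ν * j + b) := by
  set a : ℕ → ℝ := fun j => ((j + n).choose n : ℝ) * y ^ j / Real.Gamma (ν * j + b) with ha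
  have hapos : ∀ j, 0 ≤ a j := by
    intro j
    have hΓ : 0 < Real.Gamma (ν * j + b) := Real.Gamma_pos_of_pos (by positivity)
    positivity
  refine summable_of_ratio_norm_eventually_le (r := 1/2) (by norm_num) ?_
  set R : ℝ := 2 * ((n : ℝ) + 1) * (y + 1) with hR
  have hR2 : (2:ℝ) ≤ R := by nlinarith [Nat.cast_nonneg (α := ℝ) n]
  have hR0 : (0:ℝ) < R := by linarith
  have t1 : Filter.Tendsto (fun j : ℕ => ν * j + b) Filter.atTop Filter.atTop := by
    apply Filter.tendsto_atTop_add_const_right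
    exact Filter.Tendsto.const_mul_atTop hν0 tendsto_natCast_atTop_atTop
  have ev1 : ∀ᶠ j : ℕ in Filter.atTop, 1 < ν * j + b := t1.eventually_gt_atTop 1
  have ev2 : ∀ᶠ j : ℕ in Filter.atTop, R ^ (1/ν) ≤ ν * j + b + ν - 1 := by
    have : Filter.Tendsto (fun j : ℕ => ν * j + b + ν - 1) Filter.atTop Filter.atTop := by
      apply Filter.tendsto_atTop_add_const_right
      apply Filter.tendsto_atTop_add_const_right
      exact t1
    exact this.eventually_ge_atTop _
  filter_upwards [ev1, ev2] with j h1 h2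
  set s : ℝ := ν * j + b with hsdef
  have hs1 : 1 < s := h1
  have hu : (0:ℝ) < s + ν - 1 := by linarith
  have hΓs : 0 < Real.Gamma s := Real.Gamma_pos_of_pos (by linarith)
  have hΓsv : 0 < Real.Gamma (s + ν) := Real.Gamma_pos_of_pos (by linarith)
  have hP : (0:ℝ) < (s + ν - 1) ^ ν := Real.rpow_pos_of_pos hu ν
  have hGP : Real.Gamma s * (s + ν - 1) ^ ν ≤ Real.Gamma (s + ν) :=
    Gamma_mul_rpow_le ν s hν0 hν1 hs1
  -- the key bound on the power term
  have hRP : R ≤ (s + ν - 1) ^ ν := by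
    have h3 : (R ^ (1/ν)) ^ ν ≤ (s + ν - 1) ^ ν :=
      Real.rpow_le_rpow (Real.rpow_nonneg hR0.le _) h2 hν0.le
    rw [← Real.rpow_mul hR0.le, one_div, inv_mul_cancel₀ hν0.ne', Real.rpow_one] at h3
    exact h3
  have harg : ν * (j + 1 : ℕ) + b = s + ν := by push_cast; ring
  have haj1 : a (j + 1) = ((j + 1 + n).choose n : ℝ) * y ^ (j + 1) / Real.Gamma (s + ν) := by
    rw [ha]; simp only []; rw [harg]
  rw [Real.norm_eq_abs, Real.norm_eq_abs, abs_of_nonneg (hapos _), abs_of_nonneg (hapos _), haj1]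
  have hCle : ((j + 1 + n).choose n : ℝ) ≤ ((n : ℝ) + 1) * ((j + n).choose n : ℝ) :=
    choose_succ_le_mul n j
  have hstep1 : ((j + 1 + n).choose n : ℝ) * y ^ (j + 1) / Real.Gamma (s + ν)
      ≤ (((n : ℝ) + 1) * ((j + n).choose n : ℝ)) * (y * y ^ j)
        / (Real.Gamma s * (s + ν - 1) ^ ν) := by
    apply div_le_div₀ (by positivity) ?_ (by positivity) hGP
    rw [pow_succ]
    apply mul_le_mul_of_nonneg_right hCle (by positivity) |>.trans
    apply le_of_eq; ring
  have hstep2 : (((n : ℝ) + 1) * ((j + n).choose n : ℝ)) * (y * y ^ j)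
        / (Real.Gamma s * (s + ν - 1) ^ ν)
      = (((n : ℝ) + 1) * y / (s + ν - 1) ^ ν) * (((j + n).choose n : ℝ) * y ^ j / Real.Gamma s) := by
    ring
  have hstep3 : ((n : ℝ) + 1) * y / (s + ν - 1) ^ ν ≤ 1/2 := by
    rw [div_le_iff₀ hP]
    nlinarith
  calc ((j + 1 + n).choose n : ℝ) * y ^ (j + 1) / Real.Gamma (s + ν)
      ≤ (((n : ℝ) + 1) * y / (s + ν - 1) ^ ν) * (((j + n).choose n : ℝ) * y ^ j / Real.Gamma s) :=
        hstep1.trans (le_of_eq hstep2)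
    _ ≤ 1/2 * (((j + n).choose n : ℝ) * y ^ j / Real.Gamma s) := by
        apply mul_le_mul_of_nonneg_right hstep3 (by positivity)
    _ = 1/2 * a j := by rw [ha]

lemma integrableOn_rpow_exp (p η : ℝ) (hp : 0 < p) (hη : 0 < η) :
    IntegrableOn (fun x : ℝ => x ^ (p - 1) * Real.exp (-(η * x))) (Ioi 0) := by
  have h0 : IntegrableOn (fun x : ℝ => Real.exp (-(η * x)) * (η * x) ^ (p - 1)) (Ioi 0) := by
    have h := integrableOn_Ioi_comp_mul_left_iff
      (fun y : ℝ => Real.exp (-y) * y ^ (p - 1)) 0 hη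
    rw [mul_zero] at h
    exact h.mpr (Real.GammaIntegral_convergent hp)
  have h1 := h0.const_mul (η ^ (1 - p))
  apply MeasureTheory.IntegrableOn.congr_fun h1 ?_ measurableSet_Ioi
  intro x hx
  have hx0 : (0:ℝ) < x := hx
  simp only []
  rw [Real.mul_rpow hη.le hx0.le,
    show η ^ (1 - p) * (Real.exp (-(η * x)) * (η ^ (p - 1) * x ^ (p - 1)))
      = (η ^ (1 - p) * η ^ (p - 1)) * (x ^ (p - 1) * Real.exp (-(η * x))) from by ring,
    ← Real.rpow_add hη, show (1 - p) + (p - 1) = 0 from by ring, Real.rpow_zero, one_mul]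

lemma integral_const_mul_rpow_exp (p η C : ℝ) (hp : 0 < p) (hη : 0 < η) :
    ∫ x in Ioi (0:ℝ), C * (x ^ (p - 1) * Real.exp (-(η * x)))
      = C * ((1/η) ^ p * Real.Gamma p) := by
  rw [MeasureTheory.integral_const_mul, Real.integral_rpow_mul_exp_neg_mul_Ioi hp hη]

lemma lintegral_norm_const_mul_rpow_exp (p η C : ℝ) (hp : 0 < p) (hη : 0 < η) :
    ∫⁻ x in Ioi (0:ℝ), ‖C * (x ^ (p - 1) * Real.exp (-(η * x)))‖₊
      = ENNReal.ofReal (|C| * ((1/η) ^ p * Real.Gamma p)) := by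
  have hInt : IntegrableOn (fun x : ℝ => |C| * (x ^ (p - 1) * Real.exp (-(η * x)))) (Ioi 0) :=
    (integrableOn_rpow_exp p η hp hη).const_mul _
  have h1 : (∫⁻ x in Ioi (0:ℝ), ‖C * (x ^ (p - 1) * Real.exp (-(η * x)))‖₊)
      = ∫⁻ x in Ioi (0:ℝ), ENNReal.ofReal (|C| * (x ^ (p - 1) * Real.exp (-(η * x)))) := by
    apply lintegral_congr_ae
    filter_upwards [ae_restrict_mem measurableSet_Ioi] with x hx
    rw [← enorm_eq_nnnorm, ← ofReal_norm]
    congr 1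
    rw [Real.norm_eq_abs, abs_mul]
    congr 1
    have hx0 : (0:ℝ) < x := hx
    have : (0:ℝ) ≤ x ^ (p - 1) * Real.exp (-(η * x)) := by positivity
    exact abs_of_nonneg this
  have hnn : 0 ≤ᵐ[volume.restrict (Ioi (0:ℝ))]
      fun x : ℝ => |C| * (x ^ (p - 1) * Real.exp (-(η * x))) := by
    filter_upwards [ae_restrict_mem measurableSet_Ioi] with x hx
    have hx0 : (0:ℝ) < x := hx
    positivity
  rw [h1, ← MeasureTheory.ofReal_integral_eq_lintegral_ofReal hInt hnn,
    integral_const_mul_rpow_exp p η |C| hp hη]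

set_option maxHeartbeats 2000000 in
theorem laplace_mittag_leffler_kernel_density (α ν k t : ℝ) (hα : α ∈ Set.Ioo (0:ℝ) 1)
    (hν : ν ∈ Set.Ioc (0:ℝ) 1) (hk : k = α / (1 - α)) (ht : 0 ≤ t) :
    ∀ η : ℝ, 0 < η → k < η ^ ν →
      (∫ x in Set.Ioi (0:ℝ), Real.exp (-η * x) * (Real.exp (-t) / x *
        ∑' n : ℕ, (k * t * x ^ ν) ^ (n + 1) / (Nat.factorial (n + 1) : ℝ) *
          prabhakar ν (ν * (n + 1)) (n + 1) (-k * x ^ ν))) =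
      Real.exp (-(η ^ ν) * t / (η ^ ν + k)) - Real.exp (-t) := by
  obtain ⟨hα0, hα1⟩ := hα
  obtain ⟨hν0, hν1⟩ := hν
  have hk0 : 0 < k := by rw [hk]; exact div_pos hα0 (by linarith)
  have hkt : 0 ≤ k * t := mul_nonneg hk0.le ht
  intro η hη hks
  set s : ℝ := η ^ ν with hs
  have hs0 : 0 < s := Real.rpow_pos_of_pos hη ν
  have hsk0 : 0 < s + k := by linarith
  have hskm : 0 < s - k := by linarith
  -- coefficients and summands
  set C : ℕ → ℕ → ℝ := fun n j =>
    Real.exp (-t) * (k * t) ^ (n + 1) / (Nat.factorial (n + 1) : ℝ) *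
      (risingFactorial ((n : ℝ) + 1) j * (-k) ^ j /
        ((Nat.factorial j : ℝ) * Real.Gamma (ν * j + ν * ((n : ℝ) + 1)))) with hC
  set D : ℕ → ℕ → ℝ := fun n j =>
    Real.exp (-t) * (k * t) ^ (n + 1) / (Nat.factorial (n + 1) : ℝ) *
      (((j + n).choose n : ℝ) * k ^ j / Real.Gamma (ν * j + ν * ((n : ℝ) + 1))) with hD
  set F : ℕ → ℕ → ℝ → ℝ := fun n j x =>
    C n j * (x ^ (ν * ((j : ℝ) + (n : ℝ) + 1) - 1) * Real.exp (-(η * x))) with hF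
  set G : ℕ → ℝ → ℝ := fun n x => ∑' j : ℕ, F n j x with hG
  have hΓpos : ∀ n j : ℕ, 0 < Real.Gamma (ν * (j:ℝ) + ν * ((n : ℝ) + 1)) := by
    intro n j
    apply Real.Gamma_pos_of_pos
    have : (0:ℝ) ≤ (j : ℝ) := Nat.cast_nonneg j
    nlinarith
  have hppos : ∀ n j : ℕ, 0 < ν * ((j : ℝ) + (n : ℝ) + 1) := by
    intro n j
    have h1 : (0:ℝ) ≤ (j : ℝ) := Nat.cast_nonneg j
    have h2 : (0:ℝ) ≤ (n : ℝ) := Nat.cast_nonneg n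
    nlinarith
  -- C = (-1)^j * D, |C| = D
  have hCD : ∀ n j : ℕ, C n j = (-1) ^ j * D n j := by
    intro n j
    rw [hC, hD]
    simp only [risingFactorial_eq_choose_mul_factorial, neg_pow k j]
    have h1 : (Nat.factorial j : ℝ) ≠ 0 := by positivity
    have h2 : Real.Gamma (ν * j + ν * ((n : ℝ) + 1)) ≠ 0 := (hΓpos n j).ne'
    field_simp
  have hDnn : ∀ n j : ℕ, 0 ≤ D n j := by
    intro n j
    rw [hD]
    have h2 := hΓpos n j
    positivity
  have hCabs : ∀ n j : ℕ, |C n j| = D n j := by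
    intro n j
    rw [hCD n j, abs_mul, abs_pow, abs_neg, abs_one, one_pow, one_mul, abs_of_nonneg (hDnn n j)]
  -- power rewriting
  have hpow : ∀ m : ℕ, ((1:ℝ)/η) ^ (ν * (m : ℝ)) = (1/s) ^ m := by
    intro m
    rw [Real.rpow_mul (by positivity), Real.rpow_natCast]
    congr 1
    rw [one_div, one_div, Real.inv_rpow hη.le, hs]
  have hpow' : ∀ n j : ℕ, ((1:ℝ)/η) ^ (ν * ((j : ℝ) + (n : ℝ) + 1)) = (1/s) ^ (j + n + 1) := by
    intro n j
    rw [show ((j : ℝ) + (n : ℝ) + 1) = ((j + n + 1 : ℕ) : ℝ) by push_cast; ring]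
    exact hpow _
  -- value of the integral of F n j
  have hfact : ∀ m : ℕ, ((Nat.factorial m : ℝ)) ≠ 0 := fun m => by positivity
  have hIntF : ∀ n j : ℕ, ∫ x in Ioi (0:ℝ), F n j x
      = Real.exp (-t) * ((k * t / s) ^ (n + 1) / (Nat.factorial (n + 1) : ℝ)) *
        (((j + n).choose n : ℝ) * (-k / s) ^ j) := by
    intro n j
    rw [hF]
    simp only []
    rw [integral_const_mul_rpow_exp _ _ _ (hppos n j) hη, hpow' n j, hC]
    simp only [risingFactorial_eq_choose_mul_factorial]
    rw [show ν * ((j : ℝ) + (n : ℝ) + 1) = ν * (j : ℝ) + ν * ((n : ℝ) + 1) by ring]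
    have h2 : Real.Gamma (ν * (j:ℝ) + ν * ((n : ℝ) + 1)) ≠ 0 := (hΓpos n j).ne'
    rw [div_pow, div_pow, div_pow, one_pow, pow_add, pow_add]
    field_simp
    ring
  -- lintegral value of ‖F n j‖
  have hlintF : ∀ n j : ℕ, (∫⁻ x in Ioi (0:ℝ), ‖F n j x‖₊)
      = ENNReal.ofReal (Real.exp (-t) * ((k * t / s) ^ (n + 1) / (Nat.factorial (n + 1) : ℝ)) *
        (((j + n).choose n : ℝ) * (k / s) ^ j)) := by
    intro n j
    rw [hF]
    simp only []
    rw [lintegral_norm_const_mul_rpow_exp _ _ _ (hppos n j) hη, hCabs n j, hpow' n j, hD]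
    congr 1
    simp only []
    rw [show ν * ((j : ℝ) + (n : ℝ) + 1) = ν * (j : ℝ) + ν * ((n : ℝ) + 1) by ring]
    have h2 : Real.Gamma (ν * (j:ℝ) + ν * ((n : ℝ) + 1)) ≠ 0 := (hΓpos n j).ne'
    rw [div_pow, div_pow, div_pow, one_pow, pow_add, pow_add]
    field_simp
    ring
  -- geometric facts
  have hzn : ‖(-k / s : ℝ)‖ < 1 := by
    rw [Real.norm_eq_abs, abs_div, abs_neg, abs_of_pos hk0, abs_of_pos hs0, div_lt_one hs0]
    exact hks
  have hwn : ‖(k / s : ℝ)‖ < 1 := by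
    rw [Real.norm_eq_abs, abs_div, abs_of_pos hk0, abs_of_pos hs0, div_lt_one hs0]
    exact hks
  -- sum over j of the integrals
  have hTj : ∀ n : ℕ, (∑' j : ℕ, Real.exp (-t) * ((k * t / s) ^ (n + 1) / (Nat.factorial (n + 1) : ℝ)) *
        (((j + n).choose n : ℝ) * (-k / s) ^ j))
      = Real.exp (-t) * ((k * t / (s + k)) ^ (n + 1) / (Nat.factorial (n + 1) : ℝ)) := by
    intro n
    rw [tsum_mul_left, tsum_choose_mul_geometric_of_norm_lt_one n hzn]
    rw [show (1 : ℝ) - (-k / s) = (s + k) / s by field_simp; ring]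
    rw [div_pow, div_pow, div_pow]
    field_simp
  -- sum over j of the lintegral values
  have hTjB : ∀ n : ℕ, (∑' j : ℕ, Real.exp (-t) * ((k * t / s) ^ (n + 1) / (Nat.factorial (n + 1) : ℝ)) *
        (((j + n).choose n : ℝ) * (k / s) ^ j))
      = Real.exp (-t) * ((k * t / (s - k)) ^ (n + 1) / (Nat.factorial (n + 1) : ℝ)) := by
    intro n
    rw [tsum_mul_left, tsum_choose_mul_geometric_of_norm_lt_one n hwn]
    rw [show (1 : ℝ) - (k / s) = (s - k) / s by field_simp]
    rw [div_pow, div_pow, div_pow]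
    field_simp
  -- summability of the lintegral-value series over j
  have hBsum : ∀ n : ℕ, Summable (fun j : ℕ =>
      Real.exp (-t) * ((k * t / s) ^ (n + 1) / (Nat.factorial (n + 1) : ℝ)) *
        (((j + n).choose n : ℝ) * (k / s) ^ j)) := by
    intro n
    exact (summable_choose_mul_geometric_of_norm_lt_one n hwn).mul_left _
  have hBnn : ∀ n j : ℕ, 0 ≤ Real.exp (-t) * ((k * t / s) ^ (n + 1) / (Nat.factorial (n + 1) : ℝ)) *
        (((j + n).choose n : ℝ) * (k / s) ^ j) := by
    intro n j
    positivity
  -- measurability of F n j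
  have hFmeas : ∀ n j : ℕ, AEStronglyMeasurable (F n j) (volume.restrict (Ioi (0:ℝ))) := by
    intro n j
    rw [hF]
    apply Measurable.aestronglyMeasurable
    fun_prop
  -- inner lintegral sum is finite
  have hInner : ∀ n : ℕ, (∑' j : ℕ, ∫⁻ x in Ioi (0:ℝ), ‖F n j x‖₊) ≠ ⊤ := by
    intro n
    rw [tsum_congr (fun j => hlintF n j),
      ← ENNReal.ofReal_tsum_of_nonneg (hBnn n) (hBsum n)]
    exact ENNReal.ofReal_ne_top
  -- pointwise description of |F n j x| and summability in j
  have hFabs : ∀ (n : ℕ) (x : ℝ), 0 < x → ∀ j : ℕ, ‖F n j x‖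
      = (Real.exp (-t) * (k * t) ^ (n + 1) / (Nat.factorial (n + 1) : ℝ) *
          (x ^ (ν * ((n : ℝ) + 1) - 1) * Real.exp (-(η * x)))) *
        (((j + n).choose n : ℝ) * (k * x ^ ν) ^ j / Real.Gamma (ν * j + ν * ((n : ℝ) + 1))) := by
    intro n x hx j
    rw [hF]
    simp only []
    rw [Real.norm_eq_abs, abs_mul, hCabs n j, hD]
    simp only []
    have hxe : (0:ℝ) ≤ x ^ (ν * ((j : ℝ) + (n : ℝ) + 1) - 1) * Real.exp (-(η * x)) := by
      positivity
    rw [abs_of_nonneg hxe]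
    rw [show ν * ((j : ℝ) + (n : ℝ) + 1) - 1 = ν * (j : ℝ) + (ν * ((n : ℝ) + 1) - 1) by ring,
      Real.rpow_add hx, mul_pow k (x ^ ν) j,
      show (x ^ ν) ^ j = x ^ (ν * (j : ℝ)) by
        rw [← Real.rpow_natCast (x ^ ν) j, ← Real.rpow_mul hx.le]]
    ring
  have hFabsSum : ∀ (n : ℕ) (x : ℝ), 0 < x → Summable (fun j => ‖F n j x‖) := by
    intro n x hx
    have := (summable_choose_pow_div_Gamma ν (ν * ((n : ℝ) + 1)) (k * x ^ ν) n hν0 hν1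
      (by positivity) (by positivity)).mul_left
      (Real.exp (-t) * (k * t) ^ (n + 1) / (Nat.factorial (n + 1) : ℝ) *
          (x ^ (ν * ((n : ℝ) + 1) - 1) * Real.exp (-(η * x))))
    apply this.congr
    intro j
    exact (hFabs n x hx j).symm
  have hFSum : ∀ (n : ℕ) (x : ℝ), 0 < x → Summable (fun j => F n j x) := by
    intro n x hx
    have h := hFabsSum n x hx
    simp only [Real.norm_eq_abs] at h
    exact h.of_abs
  -- measurability of G n
  have hGmeas : ∀ n : ℕ, AEStronglyMeasurable (G n) (volume.restrict (Ioi (0:ℝ))) := by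
    intro n
    apply aestronglyMeasurable_of_tendsto_ae (f := fun N x => ∑ j ∈ Finset.range N, F n j x)
      Filter.atTop (fun N => by
        apply Finset.aestronglyMeasurable_fun_sum
        intro j _
        exact hFmeas n j)
    filter_upwards [ae_restrict_mem measurableSet_Ioi] with x hx
    rw [hG]
    exact (hFSum n x hx).hasSum.tendsto_sum_nat
  -- value of ∫ G n
  have hIntG : ∀ n : ℕ, (∫ x in Ioi (0:ℝ), G n x)
      = Real.exp (-t) * ((k * t / (s + k)) ^ (n + 1) / (Nat.factorial (n + 1) : ℝ)) := by
    intro n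
    rw [hG]
    simp only []
    rw [MeasureTheory.integral_tsum (fun j => hFmeas n j) (hInner n),
      tsum_congr (fun j => hIntF n j), hTj n]
  -- outer lintegral bound
  have hWnn : ∀ n : ℕ, 0 ≤ Real.exp (-t) * ((k * t / (s - k)) ^ (n + 1) / (Nat.factorial (n + 1) : ℝ)) := by
    intro n
    positivity
  have hWsum : Summable (fun n : ℕ =>
      Real.exp (-t) * ((k * t / (s - k)) ^ (n + 1) / (Nat.factorial (n + 1) : ℝ))) := by
    have h1 := (Real.summable_pow_div_factorial (k * t / (s - k))).comp_injective
      Nat.succ_injective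
    exact (h1.congr (fun n => rfl)).mul_left _
  have hGlint : ∀ n : ℕ, (∫⁻ x in Ioi (0:ℝ), ‖G n x‖₊)
      ≤ ENNReal.ofReal (Real.exp (-t) * ((k * t / (s - k)) ^ (n + 1) / (Nat.factorial (n + 1) : ℝ))) := by
    intro n
    have step1 : (∫⁻ x in Ioi (0:ℝ), ‖G n x‖₊)
        ≤ ∫⁻ x in Ioi (0:ℝ), ∑' j : ℕ, (‖F n j x‖₊ : ENNReal) := by
      apply lintegral_mono_ae
      filter_upwards [ae_restrict_mem measurableSet_Ioi] with x hx
      have hsum := hFabsSum n x hx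
      calc (‖G n x‖₊ : ENNReal) = ENNReal.ofReal ‖∑' j : ℕ, F n j x‖ := by
            rw [ofReal_norm, enorm_eq_nnnorm, hG]
        _ ≤ ENNReal.ofReal (∑' j : ℕ, ‖F n j x‖) :=
            ENNReal.ofReal_le_ofReal (norm_tsum_le_tsum_norm hsum)
        _ = ∑' j : ℕ, ENNReal.ofReal ‖F n j x‖ :=
            ENNReal.ofReal_tsum_of_nonneg (fun j => norm_nonneg _) hsum
        _ = ∑' j : ℕ, (‖F n j x‖₊ : ENNReal) := by
            simp only [ofReal_norm, enorm_eq_nnnorm]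
    have step2 : (∫⁻ x in Ioi (0:ℝ), ∑' j : ℕ, (‖F n j x‖₊ : ENNReal))
        = ∑' j : ℕ, ∫⁻ x in Ioi (0:ℝ), ‖F n j x‖₊ :=
      lintegral_tsum (fun j => (hFmeas n j).enorm)
    refine step1.trans (step2.le.trans ?_)
    rw [tsum_congr (fun j => hlintF n j),
      ← ENNReal.ofReal_tsum_of_nonneg (hBnn n) (hBsum n), hTjB n]
  have hOuter : (∑' n : ℕ, ∫⁻ x in Ioi (0:ℝ), ‖G n x‖₊) ≠ ⊤ := by
    refine ne_top_of_le_ne_top ?_ (ENNReal.tsum_le_tsum hGlint)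
    rw [← ENNReal.ofReal_tsum_of_nonneg hWnn hWsum]
    exact ENNReal.ofReal_ne_top
  -- pointwise identity of the integrand on Ioi 0
  have claim1 : EqOn (fun x : ℝ => Real.exp (-η * x) * (Real.exp (-t) / x *
        ∑' n : ℕ, (k * t * x ^ ν) ^ (n + 1) / (Nat.factorial (n + 1) : ℝ) *
          prabhakar ν (ν * (n + 1)) (n + 1) (-k * x ^ ν)))
      (fun x : ℝ => ∑' n : ℕ, G n x) (Ioi (0:ℝ)) := by
    intro x hx
    have hx0 : (0:ℝ) < x := hx
    simp only []
    rw [← mul_assoc, ← tsum_mul_left]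
    apply tsum_congr
    intro n
    rw [hG]
    simp only []
    rw [prabhakar]
    rw [show Real.exp (-η * x) * (Real.exp (-t) / x) *
        ((k * t * x ^ ν) ^ (n + 1) / (Nat.factorial (n + 1) : ℝ) *
          ∑' j : ℕ, risingFactorial ((n : ℝ) + 1) j * (-k * x ^ ν) ^ j /
            ((Nat.factorial j : ℝ) * Real.Gamma (ν * j + ν * ((n : ℝ) + 1))))
      = (Real.exp (-η * x) * (Real.exp (-t) / x) *
          ((k * t * x ^ ν) ^ (n + 1) / (Nat.factorial (n + 1) : ℝ))) *
          ∑' j : ℕ, risingFactorial ((n : ℝ) + 1) j * (-k * x ^ ν) ^ j /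
            ((Nat.factorial j : ℝ) * Real.Gamma (ν * j + ν * ((n : ℝ) + 1))) from by ring,
      ← tsum_mul_left]
    apply tsum_congr
    intro j
    rw [hF, hC]
    simp only []
    have hΓ : Real.Gamma (ν * (j:ℝ) + ν * ((n : ℝ) + 1)) ≠ 0 := (hΓpos n j).ne'
    rw [neg_mul η x, mul_pow (k * t) (x ^ ν) (n + 1), mul_pow (-k) (x ^ ν) j,
      show (x ^ ν) ^ (n + 1) = x ^ (ν * ((n:ℝ) + 1)) from by
        rw [← Real.rpow_natCast (x ^ ν) (n + 1), ← Real.rpow_mul hx0.le]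
        congr 1
        push_cast
        ring,
      show (x ^ ν) ^ j = x ^ (ν * (j:ℝ)) from by
        rw [← Real.rpow_natCast (x ^ ν) j, ← Real.rpow_mul hx0.le],
      show ν * ((j:ℝ) + (n:ℝ) + 1) - 1 = ν * (j:ℝ) + ν * ((n:ℝ) + 1) - 1 from by ring,
      Real.rpow_sub hx0, Real.rpow_add hx0, Real.rpow_one]
    field_simp
  -- final assembly
  rw [setIntegral_congr_fun measurableSet_Ioi claim1,
    MeasureTheory.integral_tsum hGmeas hOuter, tsum_congr hIntG, tsum_mul_left]
  have hexp : Real.exp (k * t / (s + k)) = ∑' m : ℕ, (k * t / (s + k)) ^ m / (m.factorial : ℝ) := by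
    rw [Real.exp_eq_exp_ℝ, NormedSpace.exp_eq_tsum_div]
  have hsplit := Summable.tsum_eq_zero_add (Real.summable_pow_div_factorial (k * t / (s + k)))
  have key : (∑' n : ℕ, (k * t / (s + k)) ^ (n + 1) / (Nat.factorial (n + 1) : ℝ))
      = Real.exp (k * t / (s + k)) - 1 := by
    rw [hexp, hsplit]
    simp [Nat.factorial_zero]
  rw [key, mul_sub, mul_one, ← Real.exp_add]
  congr 2
  field_simp
  ring
end

section
/- Bernstein function of the Mittag-Leffler kernel. Let ν∈(0,1] and k>0. Then for every η>0 with η^ν > k, η · ∫_0^∞ e^{−ηx} E_ν(−k x^ν) dx = η^ν/(η^ν + k). -/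
open MeasureTheory Real Set

theorem aux (ν k : ℝ) (hν : ν ∈ Set.Ioc (0:ℝ) 1) (hk : 0 < k) :
    ∀ η : ℝ, 0 < η → k < η ^ ν →
      η * ∫ x in Set.Ioi (0:ℝ),
        Real.exp (-η * x) * (∑' j : ℕ, (-k * x ^ ν) ^ j / Real.Gamma (ν * j + 1)) =
        η ^ ν / (η ^ ν + k) := by
  obtain ⟨hν0, hν1⟩ := hν
  intro η hη hkη
  set c : ℝ := η ^ ν with hc
  have hc0 : 0 < c := Real.rpow_pos_of_pos hη ν
  set F : ℕ → ℝ → ℝ := fun j x => ((-k) ^ j / Real.Gamma (ν * j + 1)) *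
    (Real.exp (-η * x) * x ^ (ν * j)) with hF
  have hGpos : ∀ j : ℕ, 0 < Real.Gamma (ν * j + 1) := fun j =>
    Real.Gamma_pos_of_pos (by positivity)
  have hInt : ∀ j : ℕ, IntegrableOn (F j) (Ioi 0) := by
    intro j
    apply Integrable.const_mul
    have h := integrableOn_rpow_mul_exp_neg_mul_rpow
      (p := 1) (s := ν * j) (b := η) (by nlinarith [mul_nonneg hν0.le (Nat.cast_nonneg j)]) one_pos hη
    exact h.congr_fun (fun x hx => by dsimp only; rw [Real.rpow_one]; ring) measurableSet_Ioi
  have hηj : ∀ j : ℕ, (1/η : ℝ) ^ (ν * j + 1) = (1/η) * (1/c) ^ j := by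
    intro j
    rw [Real.rpow_add (by positivity), Real.rpow_one, mul_comm]
    congr 1
    rw [Real.rpow_mul (by positivity : (0:ℝ) ≤ 1/η), Real.rpow_natCast, one_div, one_div,
      Real.inv_rpow hη.le]
  have hBase : ∀ j : ℕ, ∫ x in Ioi (0:ℝ), Real.exp (-η * x) * x ^ (ν * j)
      = (1/η) * (1/c) ^ j * Real.Gamma (ν * j + 1) := by
    intro j
    have h := Real.integral_rpow_mul_exp_neg_mul_Ioi (a := ν * j + 1) (r := η)
      (by positivity) hη
    rw [← hηj j, ← h]
    refine setIntegral_congr_fun measurableSet_Ioi (fun x hx => ?_)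
    rw [add_sub_cancel_right, neg_mul]; ring
  have hIntVal : ∀ j : ℕ, ∫ x in Ioi (0:ℝ), F j x = (1/η) * (-k / c) ^ j := by
    intro j
    rw [hF]
    simp only
    rw [integral_const_mul, hBase j]
    rw [div_pow, one_pow, div_pow]
    field_simp
  -- summability of the norms' integrals
  have hNorm : ∀ j : ℕ, ∫ x in Ioi (0:ℝ), ‖F j x‖ = (1/η) * (k / c) ^ j := by
    intro j
    have : ∫ x in Ioi (0:ℝ), ‖F j x‖
        = ∫ x in Ioi (0:ℝ), (k ^ j / Real.Gamma (ν * j + 1)) *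
            (Real.exp (-η * x) * x ^ (ν * j)) := by
      refine setIntegral_congr_fun measurableSet_Ioi (fun x hx => ?_)
      rw [hF]
      simp only [norm_mul, Real.norm_eq_abs]
      rw [abs_of_nonneg (Real.exp_pos _).le,
        abs_of_nonneg (Real.rpow_nonneg (le_of_lt hx) _),
        abs_div, abs_pow, abs_neg, abs_of_nonneg hk.le,
        abs_of_nonneg (hGpos j).le]
    rw [this, integral_const_mul, hBase j]
    rw [div_pow, one_pow, div_pow]
    field_simp
  have hSummableNorm : Summable (fun j : ℕ => ∫ x in Ioi (0:ℝ), ‖F j x‖) := by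
    simp_rw [hNorm]
    exact (summable_geometric_of_lt_one (by positivity)
      ((div_lt_one hc0).mpr hkη)).mul_left _
  -- interchange
  have hSwap : ∑' j : ℕ, (∫ x in Ioi (0:ℝ), F j x)
      = ∫ x in Ioi (0:ℝ), (∑' j : ℕ, F j x) := by
    exact integral_tsum_of_summable_integral_norm hInt hSummableNorm
  have hPt : ∀ x ∈ Ioi (0:ℝ),
      Real.exp (-η * x) * (∑' j : ℕ, (-k * x ^ ν) ^ j / Real.Gamma (ν * j + 1))
        = ∑' j : ℕ, F j x := by
    intro x hx
    rw [← tsum_mul_left]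
    refine tsum_congr fun j => ?_
    have hxp : x ^ (ν * j) = (x ^ ν) ^ j := by
      rw [Real.rpow_mul (le_of_lt hx), Real.rpow_natCast]
    rw [hF]
    simp only
    rw [hxp, mul_pow]
    ring
  have hIntegral : ∫ x in Ioi (0:ℝ),
      Real.exp (-η * x) * (∑' j : ℕ, (-k * x ^ ν) ^ j / Real.Gamma (ν * j + 1))
      = (1/η) * (1 - (-k / c))⁻¹ := by
    rw [setIntegral_congr_fun measurableSet_Ioi hPt, ← hSwap]
    simp_rw [hIntVal]
    rw [tsum_mul_left, tsum_geometric_of_abs_lt_one (by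
      rw [abs_div, abs_neg, abs_of_nonneg hk.le, abs_of_nonneg hc0.le]
      exact (div_lt_one hc0).mpr hkη)]
  rw [hIntegral]
  have : (1 : ℝ) - (-k / c) = (c + k) / c := by field_simp; ring
  rw [this]
  field_simp

theorem bernstein_function_mittag_leffler_kernel (ν k : ℝ) (hν : ν ∈ Set.Ioc (0:ℝ) 1)
    (hk : 0 < k) :
    ∀ η : ℝ, 0 < η → k < η ^ ν →
      η * ∫ x in Set.Ioi (0:ℝ), Real.exp (-η * x) * mlOne ν (-k * x ^ ν) =
        η ^ ν / (η ^ ν + k) := by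
  simp only [mlOne]
  exact aux ν k hν hk
end

section
/- Laplace transform of the incomplete-gamma-kernel density (formula (loc)). Let ρ∈(0,1], k>0, t≥0. Then for every η>0, ∫_0^∞ e^{−ηx} · (e^{−t−kx}/x) Σ_{n=1}^∞ (k^ρ t x^ρ)^n/(n! Γ(ρn)) dx = e^{−t + k^ρ t/(η+k)^ρ} − e^{−t}. -/
open MeasureTheory Real Set

theorem laplace_incomplete_gamma_kernel_density (ρ k t : ℝ) (hρ : ρ ∈ Set.Ioc (0:ℝ) 1)
    (hk : 0 < k) (ht : 0 ≤ t) :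
    ∀ η : ℝ, 0 < η →
      (∫ x in Set.Ioi (0:ℝ), Real.exp (-η * x) * (Real.exp (-t - k * x) / x *
        ∑' n : ℕ, (k ^ ρ * t * x ^ ρ) ^ (n + 1) /
          ((Nat.factorial (n + 1) : ℝ) * Real.Gamma (ρ * (n + 1))))) =
      Real.exp (-t + k ^ ρ * t / (η + k) ^ ρ) - Real.exp (-t) := by
  obtain ⟨hρ0, hρ1⟩ := hρ
  intro η hη
  have hc0 : (0:ℝ) < η + k := by positivity
  set c : ℝ := η + k with hc
  set r : ℝ := k ^ ρ * t * (1 / c) ^ ρ with hrdef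
  have hr0 : 0 ≤ r := by positivity
  set F : ℕ → ℝ → ℝ := fun n x =>
    (Real.exp (-t) * (k ^ ρ * t) ^ (n + 1) /
        ((Nat.factorial (n + 1) : ℝ) * Real.Gamma (ρ * (n + 1)))) *
      (x ^ (ρ * (n + 1) - 1) * Real.exp (-(c * x))) with hF
  have hs_pos : ∀ n : ℕ, (0:ℝ) < ρ * (n + 1) := by
    intro n
    have : (0:ℝ) < (n:ℝ) + 1 := by positivity
    exact mul_pos hρ0 this
  have hΓ : ∀ n : ℕ, 0 < Real.Gamma (ρ * (n + 1)) := fun n =>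
    Real.Gamma_pos_of_pos (hs_pos n)
  have hC0 : ∀ n : ℕ, 0 ≤ Real.exp (-t) * (k ^ ρ * t) ^ (n + 1) /
      ((Nat.factorial (n + 1) : ℝ) * Real.Gamma (ρ * (n + 1))) := by
    intro n
    have h1 : (0:ℝ) ≤ k ^ ρ * t := by positivity
    have h2 : (0:ℝ) < (Nat.factorial (n + 1) : ℝ) := by positivity
    positivity
  -- pointwise identity on Ioi 0
  have hpt : ∀ x ∈ Ioi (0:ℝ),
      Real.exp (-η * x) * (Real.exp (-t - k * x) / x *
        ∑' n : ℕ, (k ^ ρ * t * x ^ ρ) ^ (n + 1) /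
          ((Nat.factorial (n + 1) : ℝ) * Real.Gamma (ρ * (n + 1)))) = ∑' n, F n x := by
    intro x hx
    rw [mem_Ioi] at hx
    rw [← tsum_mul_left, ← tsum_mul_left]
    refine tsum_congr fun n => ?_
    have hpow : (k ^ ρ * t * x ^ ρ) ^ (n + 1) =
        (k ^ ρ * t) ^ (n + 1) * x ^ (ρ * ((n:ℝ) + 1)) := by
      rw [mul_pow, ← Real.rpow_natCast (x ^ ρ) (n + 1), ← Real.rpow_mul hx.le]
      push_cast
      ring_nf
    have hxs : x ^ (ρ * ((n:ℝ) + 1) - 1) = x ^ (ρ * ((n:ℝ) + 1)) / x := by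
      rw [Real.rpow_sub hx, Real.rpow_one]
    have he1 : Real.exp (-t - k * x) = Real.exp (-t) * Real.exp (-(k * x)) := by
      rw [← Real.exp_add]; ring_nf
    have he2 : Real.exp (-(c * x)) = Real.exp (-η * x) * Real.exp (-(k * x)) := by
      rw [← Real.exp_add]; congr 1; rw [hc]; ring
    rw [hF]
    simp only [hpow, hxs, he1, he2]
    have hxne : x ≠ 0 := hx.ne'
    have hΓne : Real.Gamma (ρ * (n + 1)) ≠ 0 := (hΓ n).ne'
    have hfne : ((Nat.factorial (n + 1) : ℝ)) ≠ 0 := by positivity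
    field_simp
  rw [setIntegral_congr_fun measurableSet_Ioi hpt]
  -- integrability of each term
  have hInt : ∀ n : ℕ, IntegrableOn (F n) (Ioi 0) := by
    intro n
    have h1 : IntegrableOn (fun x : ℝ => x ^ (ρ * ((n:ℝ) + 1) - 1) *
        Real.exp (-(c * x))) (Ioi 0) := by
      have := integrableOn_rpow_mul_exp_neg_mul_rpow
        (s := ρ * ((n:ℝ) + 1) - 1) (p := 1) (b := c)
        (by linarith [hs_pos n]) zero_lt_one hc0
      simpa [Real.rpow_one, neg_mul] using this
    exact h1.const_mul _
  -- value of each integral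
  have hval : ∀ n : ℕ, (∫ x in Ioi (0:ℝ), F n x) =
      Real.exp (-t) * r ^ (n + 1) / (Nat.factorial (n + 1) : ℝ) := by
    intro n
    rw [hF]
    simp only
    rw [integral_const_mul, Real.integral_rpow_mul_exp_neg_mul_Ioi (hs_pos n) hc0]
    have hcr : (1 / c) ^ (ρ * ((n:ℝ) + 1)) = ((1 / c) ^ ρ) ^ (n + 1) := by
      rw [← Real.rpow_natCast ((1 / c) ^ ρ) (n + 1), ← Real.rpow_mul (by positivity)]
      push_cast
      ring_nf
    rw [hcr, hrdef]
    have hΓne : Real.Gamma (ρ * (n + 1)) ≠ 0 := (hΓ n).ne'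
    have hfne : ((Nat.factorial (n + 1) : ℝ)) ≠ 0 := by positivity
    field_simp
    ring
  -- summability of the integrals of norms
  have hnorm : ∀ n : ℕ, (∫ x in Ioi (0:ℝ), ‖F n x‖) =
      Real.exp (-t) * r ^ (n + 1) / (Nat.factorial (n + 1) : ℝ) := by
    intro n
    rw [← hval n]
    refine setIntegral_congr_fun measurableSet_Ioi fun x hx => ?_
    rw [mem_Ioi] at hx
    refine Real.norm_of_nonneg ?_
    have h2 : (0:ℝ) ≤ x ^ (ρ * ((n:ℝ) + 1) - 1) := (Real.rpow_pos_of_pos hx _).le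
    exact mul_nonneg (hC0 n) (mul_nonneg h2 (Real.exp_pos _).le)
  have hsumm : Summable fun n : ℕ =>
      Real.exp (-t) * r ^ (n + 1) / (Nat.factorial (n + 1) : ℝ) := by
    have h1 : Summable fun n : ℕ => r ^ (n + 1) / (Nat.factorial (n + 1) : ℝ) :=
      (Real.summable_pow_div_factorial r).comp_injective Nat.succ_injective
    simpa [mul_div_assoc] using h1.mul_left (Real.exp (-t))
  -- swap integral and sum
  rw [← MeasureTheory.integral_tsum_of_summable_integral_norm hInt
    (by simpa only [hnorm] using hsumm)]
  simp only [hval]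
  -- sum the exponential series
  have hexp : Real.exp r = ∑' n : ℕ, r ^ n / (Nat.factorial n : ℝ) := by
    rw [Real.exp_eq_exp_ℝ, NormedSpace.exp_eq_tsum_div]
  have hshift : (∑' n : ℕ, r ^ n / (Nat.factorial n : ℝ)) =
      1 + ∑' n : ℕ, r ^ (n + 1) / (Nat.factorial (n + 1) : ℝ) := by
    rw [Summable.tsum_eq_zero_add (Real.summable_pow_div_factorial r)]
    norm_num
  have hrr : -t + k ^ ρ * t / (η + k) ^ ρ = -t + r := by
    rw [hrdef, hc]
    rw [Real.div_rpow (by norm_num) hc0.le]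
    field_simp
    simp only [Real.one_rpow, hc]
    ring
  rw [hrr, Real.exp_add]
  have : (∑' n : ℕ, Real.exp (-t) * r ^ (n + 1) / (Nat.factorial (n + 1) : ℝ)) =
      Real.exp (-t) * ∑' n : ℕ, r ^ (n + 1) / (Nat.factorial (n + 1) : ℝ) := by
    rw [← tsum_mul_left]
    exact tsum_congr fun n => by ring
  rw [this]
  have h2 : (∑' n : ℕ, r ^ (n + 1) / (Nat.factorial (n + 1) : ℝ)) = Real.exp r - 1 := by
    rw [hexp, hshift]; ring
  rw [h2]
  ring
end

section
/- Laplace transform of the two-point distributed incomplete-gamma-kernel density (Corollary 15). Let k>0, 0<ρ₁<ρ₂<1, q₁,q₂∈[0,1] with q₁+q₂=1, t≥0, and define f(x,t) = (e^{−t−kx}/x) Σ_{l=0}^∞ ((q₁ k^{ρ₁} x^{ρ₁} t)^l/l!) · W_{ρ₂, ρ₁ l}(q₂ k^{ρ₂} x^{ρ₂} t) for x>0. Then for every η>0, ∫_0^∞ e^{−ηx} f(x,t) dx = e^{−t + (q₁ k^{ρ₁}/(η+k)^{ρ₁} + q₂ k^{ρ₂}/(η+k)^{ρ₂}) t} − e^{−t}.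 -/
open MeasureTheory Real Set

lemma exp_tsum_div' (x : ℝ) : ∑' n : ℕ, x ^ n / (Nat.factorial n : ℝ) = Real.exp x := by
  rw [Real.exp_eq_exp_ℝ, NormedSpace.exp_eq_tsum_div]

lemma gamma_ge_aux {s : ℝ} (hs : 1 ≤ s) : Real.exp (-1) ≤ Real.Gamma s := by
  have hs0 : (0:ℝ) < s := lt_of_lt_of_le one_pos hs
  rw [Real.Gamma_eq_integral hs0]
  have hint : IntegrableOn (fun x : ℝ => Real.exp (-x) * x ^ (s - 1)) (Ioi 0) :=
    Real.GammaIntegral_convergent hs0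
  have h1 : IntegrableOn (fun x : ℝ => Real.exp (-x) * x ^ (s - 1)) (Ioi 1) :=
    hint.mono_set (Ioi_subset_Ioi zero_le_one)
  have hexp : IntegrableOn (fun x : ℝ => Real.exp (-x)) (Ioi 1) := by
    have := exp_neg_integrableOn_Ioi 1 (one_pos)
    simpa using this
  calc Real.exp (-1) = ∫ x in Ioi (1:ℝ), Real.exp (-x) := (integral_exp_neg_Ioi 1).symm
    _ ≤ ∫ x in Ioi (1:ℝ), Real.exp (-x) * x ^ (s - 1) := by
        refine setIntegral_mono_on hexp h1 measurableSet_Ioi fun x hx => ?_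
        have hx1 : (1:ℝ) ≤ x := le_of_lt hx
        have : (1:ℝ) ≤ x ^ (s - 1) := by
          have := Real.rpow_le_rpow_of_exponent_le hx1 (by linarith : (0:ℝ) ≤ s - 1)
          simpa using this
        nlinarith [Real.exp_pos (-x)]
    _ ≤ ∫ x in Ioi (0:ℝ), Real.exp (-x) * x ^ (s - 1) := by
        refine setIntegral_mono_set hint ?_ (HasSubset.Subset.eventuallyLE (Ioi_subset_Ioi zero_le_one))
        filter_upwards [ae_restrict_mem measurableSet_Ioi] with x hx
        have hx0 : (0:ℝ) < x := hx
        positivity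

lemma gamma_ge {s : ℝ} (hs : 0 < s) : Real.exp (-1) ≤ Real.Gamma s := by
  rcases le_or_gt 1 s with h | h
  · exact gamma_ge_aux h
  · have h1 : Real.exp (-1) ≤ Real.Gamma (s + 1) := gamma_ge_aux (by linarith)
    have h2 : Real.Gamma (s + 1) = s * Real.Gamma s := Real.Gamma_add_one hs.ne'
    nlinarith [Real.Gamma_pos_of_pos hs]

lemma one_div_gamma_le {s : ℝ} (hs : 0 ≤ s) : 1 / Real.Gamma s ≤ Real.exp 1 := by
  rcases hs.eq_or_lt with h | h
  · simp [← h, Real.Gamma_zero]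
    positivity
  · rw [div_le_iff₀ (Real.Gamma_pos_of_pos h)]
    calc (1:ℝ) = Real.exp 1 * Real.exp (-1) := by rw [← Real.exp_add]; simp
      _ ≤ Real.exp 1 * Real.Gamma s :=
        mul_le_mul_of_nonneg_left (gamma_ge h) (Real.exp_pos 1).le
      _ = Real.Gamma s * Real.exp 1 := by ring
      _ ≤ Real.exp 1 * Real.Gamma s := le_of_eq (by ring)

lemma my_gamma_integral {s b : ℝ} (hs : 0 < s) (hb : 0 < b) :
    ∫ x in Ioi (0:ℝ), Real.exp (-(b * x)) * x ^ (s - 1) = Real.Gamma s / b ^ s := by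
  have h := integral_rpow_mul_exp_neg_mul_rpow (p := 1) (q := s - 1) one_pos
    (by linarith) hb
  rw [show ∫ x in Ioi (0:ℝ), Real.exp (-(b * x)) * x ^ (s - 1)
      = ∫ x in Ioi (0:ℝ), x ^ (s - 1) * Real.exp (-b * x ^ (1:ℝ)) from
    setIntegral_congr_fun measurableSet_Ioi fun x _ => by rw [Real.rpow_one]; ring_nf, h]
  rw [show (-(s - 1 + 1) / 1 : ℝ) = -s by ring, show ((s - 1 + 1) / 1 : ℝ) = s by ring,
    Real.rpow_neg hb.le]
  field_simp

lemma my_gamma_integrable {s b : ℝ} (hs : 0 < s) (hb : 0 < b) :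
    IntegrableOn (fun x : ℝ => Real.exp (-(b * x)) * x ^ (s - 1)) (Ioi 0) := by
  have h := integrableOn_rpow_mul_exp_neg_mul_rpow (s := s - 1) (p := 1) (by linarith) one_pos hb
  refine (h.congr_fun (fun x hx => ?_) measurableSet_Ioi)
  simp only [Real.rpow_one]; ring_nf

theorem laplace_two_point_distributed_incomplete_gamma_density (k ρ₁ ρ₂ q₁ q₂ t : ℝ)
    (hk : 0 < k) (hρ₁ : 0 < ρ₁) (hρ₁₂ : ρ₁ < ρ₂) (hρ₂ : ρ₂ < 1)
    (hq₁ : q₁ ∈ Set.Icc (0:ℝ) 1) (hq₂ : q₂ ∈ Set.Icc (0:ℝ) 1) (hq : q₁ + q₂ = 1)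
    (ht : 0 ≤ t) (f : ℝ → ℝ → ℝ)
    (hf : ∀ x t : ℝ, f x t = Real.exp (-t - k * x) / x *
      ∑' l : ℕ, (q₁ * k ^ ρ₁ * x ^ ρ₁ * t) ^ l / (Nat.factorial l : ℝ) *
        wright ρ₂ (ρ₁ * l) (q₂ * k ^ ρ₂ * x ^ ρ₂ * t)) :
    ∀ η : ℝ, 0 < η →
      (∫ x in Set.Ioi (0:ℝ), Real.exp (-η * x) * f x t) =
      Real.exp (-t + (q₁ * k ^ ρ₁ / (η + k) ^ ρ₁ + q₂ * k ^ ρ₂ / (η + k) ^ ρ₂) * t) -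
        Real.exp (-t) := by
  intro η hη
  have hρ₂0 : (0:ℝ) < ρ₂ := hρ₁.trans hρ₁₂
  have hb : (0:ℝ) < η + k := by linarith
  set b := η + k with hbdef
  set u := q₁ * k ^ ρ₁ * t with hu
  set v := q₂ * k ^ ρ₂ * t with hv
  have hu0 : 0 ≤ u := mul_nonneg (mul_nonneg hq₁.1 (Real.rpow_nonneg hk.le _)) ht
  have hv0 : 0 ≤ v := mul_nonneg (mul_nonneg hq₂.1 (Real.rpow_nonneg hk.le _)) ht
  -- the summand family
  set T : ℕ × ℕ → ℝ → ℝ := fun p x =>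
    Real.exp (-t) * Real.exp (-(b * x)) / x * ((u * x ^ ρ₁) ^ p.1 / (Nat.factorial p.1 : ℝ)) *
      ((v * x ^ ρ₂) ^ p.2 / (Nat.factorial p.2 : ℝ)) *
      (1 / Real.Gamma (ρ₁ * p.1 + ρ₂ * p.2)) with hT
  have hs0 : ∀ p : ℕ × ℕ, (0:ℝ) ≤ ρ₁ * p.1 + ρ₂ * p.2 := fun p =>
    add_nonneg (mul_nonneg hρ₁.le (Nat.cast_nonneg _)) (mul_nonneg hρ₂0.le (Nat.cast_nonneg _))
  have hspos : ∀ p : ℕ × ℕ, p ≠ (0, 0) → (0:ℝ) < ρ₁ * p.1 + ρ₂ * p.2 := by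
    intro p hp
    by_cases hl : p.1 = 0
    · have hj : p.2 ≠ 0 := fun h => hp (Prod.ext hl h)
      have h1 : (1:ℝ) ≤ p.2 := by exact_mod_cast Nat.one_le_iff_ne_zero.mpr hj
      have h2 : (0:ℝ) ≤ p.1 := Nat.cast_nonneg _
      nlinarith
    · have h1 : (1:ℝ) ≤ p.1 := by exact_mod_cast Nat.one_le_iff_ne_zero.mpr hl
      have h2 : (0:ℝ) ≤ p.2 := Nat.cast_nonneg _
      nlinarith
  have hTmeas : ∀ p : ℕ × ℕ, Measurable (T p) := by
    intro p
    rw [hT]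
    fun_prop
  have hTnn : ∀ (p : ℕ × ℕ) (x : ℝ), x ∈ Ioi (0:ℝ) → 0 ≤ T p x := by
    intro p x hx
    have hx0 : (0:ℝ) < x := hx
    have h2 : 0 ≤ u * x ^ ρ₁ := mul_nonneg hu0 (Real.rpow_nonneg hx0.le _)
    have h3 : 0 ≤ v * x ^ ρ₂ := mul_nonneg hv0 (Real.rpow_nonneg hx0.le _)
    have hΓ : 0 ≤ 1 / Real.Gamma (ρ₁ * p.1 + ρ₂ * p.2) :=
      div_nonneg zero_le_one (Real.Gamma_nonneg_of_nonneg (hs0 p))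
    rw [hT]
    refine mul_nonneg (mul_nonneg (mul_nonneg ?_ ?_) ?_) hΓ
    · positivity
    · exact div_nonneg (pow_nonneg h2 _) (Nat.cast_nonneg _)
    · exact div_nonneg (pow_nonneg h3 _) (Nat.cast_nonneg _)
  have hTsum : ∀ x : ℝ, x ∈ Ioi (0:ℝ) → Summable fun p : ℕ × ℕ => T p x := by
    intro x hx
    have hx0 : (0:ℝ) < x := hx
    have h2 : 0 ≤ u * x ^ ρ₁ := mul_nonneg hu0 (Real.rpow_nonneg hx0.le _)
    have h3 : 0 ≤ v * x ^ ρ₂ := mul_nonneg hv0 (Real.rpow_nonneg hx0.le _)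
    have hK0 : 0 ≤ Real.exp (-t) * Real.exp (-(b * x)) / x := by positivity
    have hF : Summable fun l : ℕ =>
        (Real.exp (-t) * Real.exp (-(b * x)) / x) * ((u * x ^ ρ₁) ^ l / (Nat.factorial l : ℝ)) :=
      (Real.summable_pow_div_factorial _).mul_left _
    have hG : Summable fun j : ℕ => ((v * x ^ ρ₂) ^ j / (Nat.factorial j : ℝ)) * Real.exp 1 :=
      (Real.summable_pow_div_factorial _).mul_right _
    have hFG := hF.mul_of_nonneg hG
      (fun l => mul_nonneg hK0 (div_nonneg (pow_nonneg h2 _) (Nat.cast_nonneg _)))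
      (fun j => mul_nonneg (div_nonneg (pow_nonneg h3 _) (Nat.cast_nonneg _)) (Real.exp_pos 1).le)
    refine Summable.of_nonneg_of_le (fun p => hTnn p x hx) (fun p => ?_) hFG
    have hBnn : 0 ≤ (v * x ^ ρ₂) ^ p.2 / (Nat.factorial p.2 : ℝ) :=
      div_nonneg (pow_nonneg h3 _) (Nat.cast_nonneg _)
    have hAnn : 0 ≤ (Real.exp (-t) * Real.exp (-(b * x)) / x) *
        ((u * x ^ ρ₁) ^ p.1 / (Nat.factorial p.1 : ℝ)) :=
      mul_nonneg hK0 (div_nonneg (pow_nonneg h2 _) (Nat.cast_nonneg _))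
    calc T p x = ((Real.exp (-t) * Real.exp (-(b * x)) / x) *
          ((u * x ^ ρ₁) ^ p.1 / (Nat.factorial p.1 : ℝ))) *
          (((v * x ^ ρ₂) ^ p.2 / (Nat.factorial p.2 : ℝ)) *
            (1 / Real.Gamma (ρ₁ * p.1 + ρ₂ * p.2))) := by rw [hT]; ring
      _ ≤ _ := by
          refine mul_le_mul_of_nonneg_left ?_ hAnn
          exact mul_le_mul_of_nonneg_left (one_div_gamma_le (hs0 p)) hBnn
  -- pointwise expansion of the integrand into the double series
  have hpt : ∀ x : ℝ, x ∈ Ioi (0:ℝ) →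
      Real.exp (-η * x) * f x t = ∑' p : ℕ × ℕ, T p x := by
    intro x hx
    have hx0 : (0:ℝ) < x := hx
    have hinner : ∀ l : ℕ, Summable fun j : ℕ => T (l, j) x := fun l =>
      (hTsum x hx).prod_factor l
    rw [hf x t, ← mul_assoc, ← tsum_mul_left]
    refine Eq.trans (tsum_congr fun l => ?_) (Summable.tsum_prod' (hTsum x hx) hinner).symm
    have hC : Real.exp (-η * x) * (Real.exp (-t - k * x) / x)
        = Real.exp (-t) * Real.exp (-(b * x)) / x := by
      rw [mul_div_assoc', ← Real.exp_add, ← Real.exp_add, hbdef]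
      ring_nf
    rw [hC]
    simp only [wright]
    rw [← mul_assoc, ← tsum_mul_left]
    refine tsum_congr fun j => ?_
    have h1 : q₁ * k ^ ρ₁ * x ^ ρ₁ * t = u * x ^ ρ₁ := by rw [hu]; ring
    have h2 : q₂ * k ^ ρ₂ * x ^ ρ₂ * t = v * x ^ ρ₂ := by rw [hv]; ring
    rw [h1, h2, hT, add_comm (ρ₂ * (j:ℝ)) (ρ₁ * (l:ℝ))]
    ring
  -- the value of each term's integral
  set A : ℕ × ℕ → ℝ := fun p => if p = (0, 0) then 0 else
    Real.exp (-t) * (u / b ^ ρ₁) ^ p.1 * (v / b ^ ρ₂) ^ p.2 /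
      ((Nat.factorial p.1 : ℝ) * (Nat.factorial p.2 : ℝ)) with hA
  have hTzero : T (0, 0) = fun _ => (0:ℝ) := by
    funext x
    rw [hT]
    norm_num [Real.Gamma_zero]
  have hTc : ∀ p : ℕ × ℕ, p ≠ (0, 0) → ∀ x ∈ Ioi (0:ℝ), T p x =
      (Real.exp (-t) * u ^ p.1 * v ^ p.2 /
        ((Nat.factorial p.1 : ℝ) * (Nat.factorial p.2 : ℝ) * Real.Gamma (ρ₁ * p.1 + ρ₂ * p.2))) *
      (Real.exp (-(b * x)) * x ^ (ρ₁ * p.1 + ρ₂ * p.2 - 1)) := by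
    intro p hp x hx
    have hx0 : (0:ℝ) < x := hx
    have hxs : x ^ (ρ₁ * (p.1:ℝ) + ρ₂ * p.2 - 1)
        = x ^ (ρ₁ * (p.1:ℝ)) * x ^ (ρ₂ * (p.2:ℝ)) / x := by
      rw [Real.rpow_sub hx0, Real.rpow_add hx0, Real.rpow_one]
    have hx1 : (x ^ ρ₁) ^ p.1 = x ^ (ρ₁ * (p.1:ℝ)) := by
      rw [← Real.rpow_natCast (x ^ ρ₁) p.1, ← Real.rpow_mul hx0.le]
    have hx2 : (x ^ ρ₂) ^ p.2 = x ^ (ρ₂ * (p.2:ℝ)) := by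
      rw [← Real.rpow_natCast (x ^ ρ₂) p.2, ← Real.rpow_mul hx0.le]
    have e1 : (u * x ^ ρ₁) ^ p.1 = u ^ p.1 * x ^ (ρ₁ * (p.1:ℝ)) := by rw [mul_pow, hx1]
    have e2 : (v * x ^ ρ₂) ^ p.2 = v ^ p.2 * x ^ (ρ₂ * (p.2:ℝ)) := by rw [mul_pow, hx2]
    simp only [hT]
    rw [hxs, e1, e2]
    rcases eq_or_ne (Real.Gamma (ρ₁ * p.1 + ρ₂ * p.2)) 0 with hΓ | hΓ
    · rw [hΓ]; norm_num
    · field_simp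
  have hTint : ∀ p : ℕ × ℕ, IntegrableOn (T p) (Ioi (0:ℝ)) := by
    intro p
    by_cases hp : p = (0, 0)
    · rw [hp, hTzero]
      exact integrableOn_zero
    · have hsp := hspos p hp
      exact IntegrableOn.congr_fun ((my_gamma_integrable hsp hb).const_mul _)
        (fun x hx => (hTc p hp x hx).symm) measurableSet_Ioi
  have hIA : ∀ p : ℕ × ℕ, (∫ x in Ioi (0:ℝ), T p x) = A p := by
    intro p
    by_cases hp : p = (0, 0)
    · rw [hp, hTzero]
      simp [hA]
    · have hsp := hspos p hp
      rw [setIntegral_congr_fun measurableSet_Ioi (fun x hx => hTc p hp x hx),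
        integral_const_mul _ _, my_gamma_integral hsp hb]
      simp only [hA, if_neg hp]
      have hΓ : Real.Gamma (ρ₁ * p.1 + ρ₂ * p.2) ≠ 0 := (Real.Gamma_pos_of_pos hsp).ne'
      have hbs : b ^ (ρ₁ * (p.1:ℝ) + ρ₂ * (p.2:ℝ)) = (b ^ ρ₁) ^ p.1 * (b ^ ρ₂) ^ p.2 := by
        rw [Real.rpow_add hb, ← Real.rpow_natCast (b ^ ρ₁) p.1, ← Real.rpow_natCast (b ^ ρ₂) p.2,
          ← Real.rpow_mul hb.le, ← Real.rpow_mul hb.le]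
      rw [hbs]
      have hb1 : (0:ℝ) < b ^ ρ₁ := Real.rpow_pos_of_pos hb _
      have hb2 : (0:ℝ) < b ^ ρ₂ := Real.rpow_pos_of_pos hb _
      have hf1 : ((Nat.factorial p.1 : ℝ)) ≠ 0 := Nat.cast_ne_zero.mpr (Nat.factorial_ne_zero _)
      have hf2 : ((Nat.factorial p.2 : ℝ)) ≠ 0 := Nat.cast_ne_zero.mpr (Nat.factorial_ne_zero _)
      field_simp
      ring
      rw [inv_pow, inv_pow]; field_simp
  -- the full series
  set W : ℕ × ℕ → ℝ := fun p => Real.exp (-t) * (u / b ^ ρ₁) ^ p.1 * (v / b ^ ρ₂) ^ p.2 /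
    ((Nat.factorial p.1 : ℝ) * (Nat.factorial p.2 : ℝ)) with hW
  have hα0 : 0 ≤ u / b ^ ρ₁ := div_nonneg hu0 (Real.rpow_pos_of_pos hb _).le
  have hβ0 : 0 ≤ v / b ^ ρ₂ := div_nonneg hv0 (Real.rpow_pos_of_pos hb _).le
  have hWsum : Summable W := by
    have h := ((Real.summable_pow_div_factorial (u / b ^ ρ₁)).mul_left
        (Real.exp (-t))).mul_of_nonneg (Real.summable_pow_div_factorial (v / b ^ ρ₂))
      (fun l => mul_nonneg (Real.exp_pos _).le
        (div_nonneg (pow_nonneg hα0 _) (Nat.cast_nonneg _)))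
      (fun j => div_nonneg (pow_nonneg hβ0 _) (Nat.cast_nonneg _))
    exact h.congr fun p => by simp only [hW]; ring
  have hWnn : ∀ p : ℕ × ℕ, 0 ≤ W p := by
    intro p
    simp only [hW]
    exact div_nonneg (mul_nonneg (mul_nonneg (Real.exp_pos _).le (pow_nonneg hα0 _))
      (pow_nonneg hβ0 _)) (mul_nonneg (Nat.cast_nonneg _) (Nat.cast_nonneg _))
  have hAnn : ∀ p : ℕ × ℕ, 0 ≤ A p := by
    intro p
    by_cases hp : p = (0, 0)
    · simp [hA, hp]
    · simp only [hA, if_neg hp]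
      exact div_nonneg (mul_nonneg (mul_nonneg (Real.exp_pos _).le (pow_nonneg hα0 _))
        (pow_nonneg hβ0 _)) (mul_nonneg (Nat.cast_nonneg _) (Nat.cast_nonneg _))
  have hAleW : ∀ p : ℕ × ℕ, A p ≤ W p := by
    intro p
    by_cases hp : p = (0, 0)
    · simp only [hA, if_pos hp]
      exact hWnn p
    · simp only [hA, if_neg hp, hW]
      exact le_rfl
  have hAsum : Summable A := Summable.of_nonneg_of_le hAnn hAleW hWsum
  have hWinner : ∀ l : ℕ, Summable fun j : ℕ => W (l, j) := fun l => hWsum.prod_factor l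
  have htW : ∑' p : ℕ × ℕ, W p
      = Real.exp (-t) * Real.exp (u / b ^ ρ₁) * Real.exp (v / b ^ ρ₂) := by
    rw [Summable.tsum_prod' hWsum hWinner]
    have h1 : ∀ l : ℕ, (∑' j : ℕ, W (l, j))
        = (Real.exp (-t) * (u / b ^ ρ₁) ^ l / (Nat.factorial l : ℝ)) * Real.exp (v / b ^ ρ₂) := by
      intro l
      have h0 : ∀ j : ℕ, W (l, j) = (Real.exp (-t) * (u / b ^ ρ₁) ^ l / (Nat.factorial l : ℝ)) *
          ((v / b ^ ρ₂) ^ j / (Nat.factorial j : ℝ)) := fun j => by simp only [hW]; ring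
      rw [tsum_congr h0, tsum_mul_left, exp_tsum_div']
    rw [tsum_congr h1]
    have h2 : ∀ l : ℕ, (Real.exp (-t) * (u / b ^ ρ₁) ^ l / (Nat.factorial l : ℝ)) *
        Real.exp (v / b ^ ρ₂) = (Real.exp (-t) * Real.exp (v / b ^ ρ₂)) *
        ((u / b ^ ρ₁) ^ l / (Nat.factorial l : ℝ)) := fun l => by ring
    rw [tsum_congr h2, tsum_mul_left, exp_tsum_div']
    ring
  have hsplit : ∀ p : ℕ × ℕ, W p = A p + (if p = ((0, 0) : ℕ × ℕ) then Real.exp (-t) else 0) := by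
    intro p
    by_cases hp : p = (0, 0)
    · subst hp
      simp [hA, hW]
    · simp only [hA, hW, if_neg hp]
      simp [hp]
  have h1 : ∑' p : ℕ × ℕ, W p = (∑' p : ℕ × ℕ, A p) + Real.exp (-t) := by
    rw [tsum_congr hsplit, Summable.tsum_add hAsum
      ((hasSum_ite_eq ((0, 0) : ℕ × ℕ) (Real.exp (-t))).summable),
      (hasSum_ite_eq ((0, 0) : ℕ × ℕ) (Real.exp (-t))).tsum_eq]
  have hAts : ∑' p : ℕ × ℕ, A p
      = Real.exp (-t + (q₁ * k ^ ρ₁ / b ^ ρ₁ + q₂ * k ^ ρ₂ / b ^ ρ₂) * t) - Real.exp (-t) := by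
    have h2 : Real.exp (-t) * Real.exp (u / b ^ ρ₁) * Real.exp (v / b ^ ρ₂)
        = Real.exp (-t + (q₁ * k ^ ρ₁ / b ^ ρ₁ + q₂ * k ^ ρ₂ / b ^ ρ₂) * t) := by
      rw [← Real.exp_add, ← Real.exp_add]
      congr 1
      rw [hu, hv]
      ring
    rw [htW, h2] at h1
    linarith
  -- assemble
  have hGnn : ∀ x ∈ Ioi (0:ℝ), 0 ≤ Real.exp (-η * x) * f x t := fun x hx => by
    rw [hpt x hx]; exact tsum_nonneg fun p => hTnn p x hx
  have hmeasF : Measurable fun x => ∑' p : ℕ × ℕ, ENNReal.ofReal (T p x) :=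
    Measurable.ennreal_tsum fun p => (hTmeas p).ennreal_ofReal
  have hae1 : (fun x => ENNReal.ofReal (Real.exp (-η * x) * f x t))
      =ᵐ[volume.restrict (Ioi (0:ℝ))] fun x => ∑' p : ℕ × ℕ, ENNReal.ofReal (T p x) := by
    filter_upwards [ae_restrict_mem measurableSet_Ioi] with x hx
    rw [hpt x hx, ENNReal.ofReal_tsum_of_nonneg (fun p => hTnn p x hx) (hTsum x hx)]
  have hGmeas : AEStronglyMeasurable (fun x => Real.exp (-η * x) * f x t)
      (volume.restrict (Ioi (0:ℝ))) := by
    refine (hmeasF.ennreal_toReal).aestronglyMeasurable.congr ?_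
    filter_upwards [ae_restrict_mem measurableSet_Ioi] with x hx
    rw [← ENNReal.ofReal_tsum_of_nonneg (fun p => hTnn p x hx) (hTsum x hx),
      ENNReal.toReal_ofReal (tsum_nonneg fun p => hTnn p x hx)]
    exact (hpt x hx).symm
  have hlint : ∀ p : ℕ × ℕ, (∫⁻ x in Ioi (0:ℝ), ENNReal.ofReal (T p x)) = ENNReal.ofReal (A p) := by
    intro p
    rw [← MeasureTheory.ofReal_integral_eq_lintegral_ofReal (hTint p)
      ((ae_restrict_iff' measurableSet_Ioi).mpr (ae_of_all _ fun x hx => hTnn p x hx)), hIA p]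
  rw [MeasureTheory.integral_eq_lintegral_of_nonneg_ae
      ((ae_restrict_iff' measurableSet_Ioi).mpr (ae_of_all _ hGnn)) hGmeas,
    lintegral_congr_ae hae1,
    lintegral_tsum (fun p => ((hTmeas p).ennreal_ofReal).aemeasurable),
    tsum_congr hlint, ← ENNReal.ofReal_tsum_of_nonneg hAnn hAsum,
    ENNReal.toReal_ofReal (tsum_nonneg hAnn), hAts]
end
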